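/- arXiv:1904.04755 — 8 statements merged into one kernel-verified Lean document; each statement's English description precedes it below -/
import Mathlib

section
/- Let n ≥ 1 and fix ε > 0 with n·ε² ≥ 2. Then for any family of data-dependent hypothesis sets (H_S)_{S∈Z^m}, the following symmetrization inequality holds: P_{S~D^m}[ sup_{h∈H_S} R(h) − R̂_S(h) > ε ] ≤ 2·P_{S~D^m, T~D^n}[ sup_{h∈H_S} R̂_T(h) − R̂_S(h) > ε/2 ], where S and T are drawn independently. -/
open MeasureTheory Finset

lemma sym_core {Z : Type*} [MeasurableSpace Z] (D : Measure Z) [IsProbabilityMeasure D]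
    (n : ℕ) (hn : 1 ≤ n) (f : Z → ℝ) (hfm : Measurable f)
    (hb : ∀ z, f z ∈ Set.Icc (0 : ℝ) 1) (ε : ℝ) (hε : 0 < ε)
    (hnε : 2 ≤ (n : ℝ) * ε ^ 2) :
    (Measure.pi fun _ : Fin n => D)
      {T | (n : ℝ)⁻¹ * ∑ i, f (T i) ≤ (∫ z, f z ∂D) - ε / 2} ≤ 2⁻¹ := by
  letI : MeasureSpace Z := ⟨D⟩
  haveI : IsProbabilityMeasure (volume : Measure Z) := ‹IsProbabilityMeasure D›
  have hn0 : (0 : ℝ) < n := by exact_mod_cast hn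
  set ν : Measure (Fin n → Z) := Measure.pi fun _ : Fin n => D with hν
  haveI : IsProbabilityMeasure ν := by infer_instance
  set R : ℝ := ∫ z, f z ∂D with hR
  have hfi : Integrable f D := by
    refine (integrable_const (1:ℝ)).mono' hfm.aestronglyMeasurable (ae_of_all _ fun z => ?_)
    rw [Real.norm_eq_abs, abs_le]; exact ⟨by linarith [(hb z).1], (hb z).2⟩
  have hR0 : 0 ≤ R := integral_nonneg fun z => (hb z).1
  have hR1 : R ≤ 1 := by
    calc R ≤ ∫ _ : Z, (1:ℝ) ∂D := integral_mono hfi (integrable_const 1) fun z => (hb z).2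
    _ = 1 := by simp
  set g : Z → ℝ := fun z => f z - R with hg
  have hgm : Measurable g := hfm.sub measurable_const
  have hgb : ∀ z, |g z| ≤ 1 := fun z => by
    simp only [hg]; rw [abs_le]
    constructor <;> [linarith [(hb z).1]; linarith [(hb z).2]]
  have hgi : Integrable g D := hfi.sub (integrable_const R)
  have hg0 : ∫ z, g z ∂D = 0 := by
    rw [hg, integral_sub hfi (integrable_const R)]; simp [hR]
  have hev : ∀ i : Fin n, Measurable fun T : Fin n → Z => g (T i) := fun i =>
    hgm.comp (measurable_pi_apply i)
  -- integrability of products on ν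
  have hint : ∀ i j : Fin n, Integrable (fun T : Fin n → Z => g (T i) * g (T j)) ν := by
    intro i j
    have hm := (hev i).mul (hev j)
    refine (integrable_const (1:ℝ)).mono' hm.aestronglyMeasurable (ae_of_all _ fun T => ?_)
    rw [Real.norm_eq_abs, abs_mul]
    calc |g (T i)| * |g (T j)| ≤ 1 * 1 :=
      mul_le_mul (hgb _) (hgb _) (abs_nonneg _) zero_le_one
    _ = 1 := by ring
  -- second moment of each pair
  have key : ∀ i j : Fin n, ∫ T : Fin n → Z, g (T i) * g (T j) ∂ν
      = if i = j then ∫ z, g z * g z ∂D else 0 := by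
    intro i j
    have hprod := integral_fintype_prod_eq_prod (𝕜 := ℝ) (μ := fun _ => volume)
      (fun k (z : Z) => (if k = i then g z else 1) * (if k = j then g z else 1))
    have hL : (∫ x : Fin n → Z, ∏ k, ((if k = i then g (x k) else 1) * (if k = j then g (x k) else 1)))
        = ∫ T : Fin n → Z, g (T i) * g (T j) ∂ν := by
      rw [MeasureTheory.volume_pi]
      congr 1
      funext T
      rw [Finset.prod_mul_distrib, Finset.prod_ite_eq', Finset.prod_ite_eq']
      simp
    rw [← MeasureTheory.volume_pi] at hprod
    rw [← hL, hprod]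
    by_cases hij : i = j
    · subst hij
      rw [if_pos rfl]
      have step1 : ∀ k : Fin n, (∫ z : Z, (if k = i then g z else 1) * (if k = i then g z else 1))
          = if k = i then ∫ z, g z * g z ∂D else 1 := by
        intro k
        by_cases hk : k = i
        · simp only [if_pos hk]; rfl
        · simp only [if_neg hk]; simp
      rw [Finset.prod_congr rfl fun k _ => step1 k, Finset.prod_ite_eq',
        if_pos (Finset.mem_univ i)]
    · rw [if_neg hij]
      refine Finset.prod_eq_zero (Finset.mem_univ i) ?_
      have : (∫ x : Z, (if i = i then g x else 1) * (if i = j then g x else 1))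
          = ∫ x : Z, g x ∂D := by
        congr 1; funext x; rw [if_pos rfl, if_neg hij, mul_one]
      rw [this, hg0]
  -- variance bound
  have hffi : Integrable (fun z => f z * f z) D := by
    refine (integrable_const (1:ℝ)).mono' (hfm.mul hfm).aestronglyMeasurable
      (ae_of_all _ fun z => ?_)
    rw [Real.norm_eq_abs, abs_mul, abs_of_nonneg (hb z).1]
    calc f z * f z ≤ 1 * 1 := mul_le_mul (hb z).2 (hb z).2 (hb z).1 zero_le_one
    _ = 1 := by ring
  have hg2 : ∫ z, g z * g z ∂D ≤ 4⁻¹ := by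
    have h1 : ∫ z, g z * g z ∂D = (∫ z, f z * f z ∂D) - (2 * R) * R + R ^ 2 := by
      have e : (fun z => g z * g z) = fun z => (f z * f z - (2 * R) * f z) + R ^ 2 := by
        funext z; simp only [hg]; ring
      have hI1 : Integrable (fun z => f z * f z - 2 * R * f z) D :=
        hffi.sub (hfi.const_mul (2 * R))
      rw [e, integral_add hI1 (integrable_const _),
        integral_sub hffi (hfi.const_mul (2 * R)), MeasureTheory.integral_const_mul, integral_const]
      simp [← hR]
    have h2 : ∫ z, f z * f z ∂D ≤ R := by
      refine integral_mono hffi hfi fun z => ?_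
      calc f z * f z ≤ f z * 1 := mul_le_mul_of_nonneg_left (hb z).2 (hb z).1
      _ = f z := by ring
    nlinarith [sq_nonneg (R - 2⁻¹)]
  -- second moment of the sum
  have hsum : ∫ T : Fin n → Z, (∑ i, g (T i)) * (∑ j, g (T j)) ∂ν ≤ (n : ℝ) * 4⁻¹ := by
    have e1 : ∀ T : Fin n → Z, (∑ i, g (T i)) * (∑ j, g (T j))
        = ∑ i, ∑ j, g (T i) * g (T j) := fun T => by rw [Finset.sum_mul_sum]
    rw [integral_congr_ae (ae_of_all _ e1)]
    rw [integral_finset_sum _ fun i _ => integrable_finset_sum _ fun j _ => hint i j]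
    have e2 : ∀ i : Fin n, (∫ T : Fin n → Z, ∑ j, g (T i) * g (T j) ∂ν)
        = ∫ z, g z * g z ∂D := by
      intro i
      rw [integral_finset_sum _ fun j _ => hint i j,
        Finset.sum_congr rfl fun j _ => key i j]
      simp
    rw [Finset.sum_congr rfl fun i _ => e2 i, Finset.sum_const, card_univ, Fintype.card_fin,
      nsmul_eq_mul]
    exact mul_le_mul_of_nonneg_left hg2 hn0.le
  -- mean square bound
  set M : (Fin n → Z) → ℝ := fun T => (n : ℝ)⁻¹ * ∑ i, f (T i) - R with hM
  have hMsq : ∫ T, M T ^ 2 ∂ν ≤ (4 * n : ℝ)⁻¹ := by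
    have e2 : ∀ T : Fin n → Z, M T ^ 2
        = ((n:ℝ)⁻¹ * (n:ℝ)⁻¹) * ((∑ i, g (T i)) * (∑ j, g (T j))) := by
      intro T
      have e3 : M T = (n:ℝ)⁻¹ * ∑ i, g (T i) := by
        simp only [hM, hg]
        simp only [Finset.sum_sub_distrib, Finset.sum_const, card_univ, Fintype.card_fin,
          nsmul_eq_mul, mul_sub]
        rw [inv_mul_cancel_left₀ (ne_of_gt hn0)]
      rw [e3]; ring
    rw [integral_congr_ae (ae_of_all _ e2), integral_const_mul]
    calc (n:ℝ)⁻¹ * (n:ℝ)⁻¹ * ∫ T : Fin n → Z, (∑ i, g (T i)) * (∑ j, g (T j)) ∂ν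
        ≤ (n:ℝ)⁻¹ * (n:ℝ)⁻¹ * ((n:ℝ) * 4⁻¹) := by
          exact mul_le_mul_of_nonneg_left hsum (by positivity)
      _ = (4 * n : ℝ)⁻¹ := by field_simp
  -- Markov / Chebyshev
  have hMm : Measurable M := ((measurable_const.mul (Finset.measurable_sum _ fun i _ =>
        hfm.comp (measurable_pi_apply i))).sub measurable_const)
  have hMi : Integrable (fun T => M T ^ 2) ν := by
    refine (integrable_const (1:ℝ)).mono' (hMm.pow_const 2).aestronglyMeasurable
      (ae_of_all _ fun T => ?_)
    have hm0 : 0 ≤ (n:ℝ)⁻¹ * ∑ i, f (T i) :=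
      mul_nonneg (by positivity) (Finset.sum_nonneg fun i _ => (hb _).1)
    have hm1 : (n:ℝ)⁻¹ * ∑ i, f (T i) ≤ 1 := by
      have hss : ∑ i, f (T i) ≤ (n : ℝ) := by
        calc ∑ i, f (T i) ≤ ∑ _i : Fin n, (1:ℝ) := Finset.sum_le_sum fun i _ => (hb _).2
        _ = n := by simp
      calc (n:ℝ)⁻¹ * ∑ i, f (T i) ≤ (n:ℝ)⁻¹ * n := mul_le_mul_of_nonneg_left hss (by positivity)
      _ = 1 := inv_mul_cancel₀ (ne_of_gt hn0)
    rw [Real.norm_eq_abs, abs_le]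
    simp only [hM]
    constructor
    · nlinarith
    · nlinarith
  have markov := mul_meas_ge_le_lintegral₀ (μ := ν)
    (f := fun T => ENNReal.ofReal (M T ^ 2))
    ((hMm.pow_const 2).ennreal_ofReal.aemeasurable) (ENNReal.ofReal ((ε/2)^2))
  have hsubset : {T : Fin n → Z | (n : ℝ)⁻¹ * ∑ i, f (T i) ≤ R - ε / 2}
      ⊆ {T | ENNReal.ofReal ((ε/2)^2) ≤ ENNReal.ofReal (M T ^ 2)} := by
    intro T hT
    simp only [Set.mem_setOf_eq] at hT ⊢
    refine ENNReal.ofReal_le_ofReal ?_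
    have h1 : M T ≤ -(ε/2) := by simp only [hM]; linarith
    nlinarith [hε]
  have hlint : ∫⁻ T, ENNReal.ofReal (M T ^ 2) ∂ν = ENNReal.ofReal (∫ T, M T ^ 2 ∂ν) :=
    (ofReal_integral_eq_lintegral_ofReal hMi (ae_of_all _ fun T => sq_nonneg _)).symm
  have step : ENNReal.ofReal ((ε/2)^2) * ν {T : Fin n → Z | (n : ℝ)⁻¹ * ∑ i, f (T i) ≤ R - ε / 2}
      ≤ ENNReal.ofReal ((4 * n : ℝ)⁻¹) := by
    calc ENNReal.ofReal ((ε/2)^2) * ν {T : Fin n → Z | (n : ℝ)⁻¹ * ∑ i, f (T i) ≤ R - ε / 2}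
        ≤ ENNReal.ofReal ((ε/2)^2) * ν {T | ENNReal.ofReal ((ε/2)^2) ≤ ENNReal.ofReal (M T ^ 2)} :=
          mul_le_mul_right (measure_mono hsubset) _
      _ ≤ ∫⁻ T, ENNReal.ofReal (M T ^ 2) ∂ν := markov
      _ = ENNReal.ofReal (∫ T, M T ^ 2 ∂ν) := hlint
      _ ≤ ENNReal.ofReal ((4 * n : ℝ)⁻¹) := ENNReal.ofReal_le_ofReal hMsq
  have hc0 : ENNReal.ofReal ((ε/2)^2) ≠ 0 := by
    simp only [ne_eq, ENNReal.ofReal_eq_zero, not_le]; positivity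
  have hct : ENNReal.ofReal ((ε/2)^2) ≠ ⊤ := ENNReal.ofReal_ne_top
  have final : ν {T : Fin n → Z | (n : ℝ)⁻¹ * ∑ i, f (T i) ≤ R - ε / 2}
      ≤ ENNReal.ofReal ((4 * n : ℝ)⁻¹) / ENNReal.ofReal ((ε/2)^2) := by
    rw [ENNReal.le_div_iff_mul_le (Or.inl hc0) (Or.inl hct), mul_comm]
    exact step
  refine final.trans ?_
  rw [← ENNReal.ofReal_div_of_pos (by positivity)]
  have hreal : ((4 * n : ℝ)⁻¹ / (ε/2)^2) ≤ 2⁻¹ := by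
    have e : ((4 * n : ℝ)⁻¹ / (ε/2)^2) = ((4 * n) * (ε/2)^2)⁻¹ := by
      rw [division_def, ← mul_inv]
    rw [e]
    refine inv_anti₀ (by norm_num) ?_
    nlinarith
  refine (ENNReal.ofReal_le_ofReal hreal).trans ?_
  rw [ENNReal.ofReal_inv_of_pos (by norm_num), ENNReal.ofReal_ofNat]
lemma sym_le_biSup {α : Type*} {s : Set α} {F : α → ℝ} (hF : ∀ a, F a ≤ 1) {a : α}
    (ha : a ∈ s) : F a ≤ ⨆ b ∈ s, F b := by
  have h1 : ∀ b, (⨆ _ : b ∈ s, F b) ≤ 1 := fun b => Real.iSup_le (fun _ => hF b) one_pos.le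
  calc F a = ⨆ _ : a ∈ s, F a := (ciSup_pos (f := fun _ : a ∈ s => F a) ha).symm
  _ ≤ ⨆ b, ⨆ _ : b ∈ s, F b :=
    le_ciSup (f := fun b => ⨆ _ : b ∈ s, F b) ⟨1, by rintro _ ⟨b, rfl⟩; exact h1 b⟩ a

lemma sym_exists_of_lt_biSup {α : Type*} {s : Set α} {F : α → ℝ} {ε : ℝ} (hε : 0 ≤ ε)
    (h : ε < ⨆ a ∈ s, F a) : ∃ a ∈ s, ε < F a := by
  by_contra hc
  push_neg at hc
  exact absurd (Real.iSup_le (fun a => Real.iSup_le (fun ha => hc a ha) hε) hε) (not_le.2 h)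

lemma sym_cheb {Z : Type*} [MeasurableSpace Z] (D : Measure Z) [IsProbabilityMeasure D]
    (n : ℕ) (hn : 1 ≤ n) (f : Z → ℝ) (hf : Integrable f D)
    (hb : ∀ z, f z ∈ Set.Icc (0 : ℝ) 1) (ε : ℝ) (hε : 0 < ε)
    (hnε : 2 ≤ (n : ℝ) * ε ^ 2) :
    2⁻¹ ≤ (Measure.pi fun _ : Fin n => D)
      {T | (∫ z, f z ∂D) - ε / 2 < (n : ℝ)⁻¹ * ∑ i, f (T i)} := by
  set ν : Measure (Fin n → Z) := Measure.pi fun _ : Fin n => D with hν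
  haveI : IsProbabilityMeasure ν := by rw [hν]; infer_instance
  set f' : Z → ℝ := fun z => max 0 (min 1 (hf.1.mk f z)) with hf'
  have hm' : Measurable f' :=
    measurable_const.max (measurable_const.min hf.1.stronglyMeasurable_mk.measurable)
  have hae : f =ᵐ[D] f' := by
    refine hf.1.ae_eq_mk.mono fun z hz => ?_
    simp only [hf']
    rw [← hz, min_eq_right (hb z).2, max_eq_right (hb z).1]
  have hb' : ∀ z, f' z ∈ Set.Icc (0 : ℝ) 1 :=
    fun z => ⟨le_max_left _ _, max_le one_pos.le (min_le_left _ _)⟩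
  have hReq : ∫ z, f z ∂D = ∫ z, f' z ∂D := integral_congr_ae hae
  have hnull : ∀ᵐ T ∂ν, ∀ i, f (T i) = f' (T i) := by
    refine ae_all_iff.2 fun i => ?_
    have h0 : D {z | ¬ f z = f' z} = 0 := ae_iff.1 hae
    rw [ae_iff]
    exact Measure.pi_eval_preimage_null (μ := fun _ : Fin n => D) h0
  have hseteq : {T : Fin n → Z | (∫ z, f z ∂D) - ε / 2 < (n : ℝ)⁻¹ * ∑ i, f (T i)}
      =ᵐ[ν] {T | (∫ z, f' z ∂D) - ε / 2 < (n : ℝ)⁻¹ * ∑ i, f' (T i)} := by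
    refine Filter.eventuallyEq_set.2 (hnull.mono fun T hT => ?_)
    simp only [Set.mem_setOf_eq]
    rw [hReq, Finset.sum_congr rfl fun i _ => hT i]
  rw [measure_congr hseteq]
  have hcore := sym_core D n hn f' hm' hb' ε hε hnε
  rw [← hν] at hcore
  have huniv : (1 : ENNReal) ≤
      ν {T | (∫ z, f' z ∂D) - ε / 2 < (n : ℝ)⁻¹ * ∑ i, f' (T i)}
      + ν {T | (n : ℝ)⁻¹ * ∑ i, f' (T i) ≤ (∫ z, f' z ∂D) - ε / 2} := by
    have : (Set.univ : Set (Fin n → Z)) ⊆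
        {T | (∫ z, f' z ∂D) - ε / 2 < (n : ℝ)⁻¹ * ∑ i, f' (T i)}
        ∪ {T | (n : ℝ)⁻¹ * ∑ i, f' (T i) ≤ (∫ z, f' z ∂D) - ε / 2} := by
      intro T _
      rcases lt_or_ge ((∫ z, f' z ∂D) - ε / 2) ((n : ℝ)⁻¹ * ∑ i, f' (T i)) with h | h
      · exact Or.inl h
      · exact Or.inr h
    calc (1 : ENNReal) = ν Set.univ := (measure_univ).symm
    _ ≤ _ := (measure_mono this).trans (measure_union_le _ _)
  have := huniv.trans (add_le_add_right hcore _)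
  rw [← ENNReal.inv_two_add_inv_two] at this
  exact (ENNReal.add_le_add_iff_right (by norm_num)).mp this

/-- Symmetrization for data-dependent hypothesis sets: for `ε > 0` with `n ε² ≥ 2`,
`P_{S ~ D^m}[ sup_{h ∈ H_S} R(h) - R̂_S(h) > ε ]
  ≤ 2 P_{S ~ D^m, T ~ D^n}[ sup_{h ∈ H_S} R̂_T(h) - R̂_S(h) > ε/2 ]`. -/
theorem stmt6 {Z Hyp : Type*} [MeasurableSpace Z] (D : Measure Z) [IsProbabilityMeasure D]
    (m n : ℕ) (hm : 0 < m) (hn : 1 ≤ n)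
    (H : (Fin m → Z) → Set Hyp) (L : Hyp → Z → ℝ)
    (hL : ∀ h z, L h z ∈ Set.Icc (0 : ℝ) 1)
    (ε : ℝ) (hε : 0 < ε) (hnε : 2 ≤ (n : ℝ) * ε ^ 2) :
    (Measure.pi fun _ : Fin m => D)
        {S | (⨆ h ∈ H S, ((∫ z, L h z ∂D) - (m : ℝ)⁻¹ * ∑ i, L h (S i))) > ε}
      ≤ 2 * ((Measure.pi fun _ : Fin m => D).prod (Measure.pi fun _ : Fin n => D))
          {p | (⨆ h ∈ H p.1,
            ((n : ℝ)⁻¹ * ∑ i, L h (p.2 i) - (m : ℝ)⁻¹ * ∑ i, L h (p.1 i))) > ε / 2} := by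
  classical
  have hn0 : (0 : ℝ) < n := by exact_mod_cast hn
  set μ : Measure (Fin m → Z) := Measure.pi fun _ : Fin m => D with hμ
  set ν : Measure (Fin n → Z) := Measure.pi fun _ : Fin n => D with hν
  set B : Set ((Fin m → Z) × (Fin n → Z)) :=
    {p | (⨆ h ∈ H p.1,
      ((n : ℝ)⁻¹ * ∑ i, L h (p.2 i) - (m : ℝ)⁻¹ * ∑ i, L h (p.1 i))) > ε / 2} with hB
  obtain ⟨B', hsub, hB'm, hB'eq⟩ := exists_measurable_superset (μ.prod ν) B
  have key : ∀ S : Fin m → Z,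
      (⨆ h ∈ H S, ((∫ z, L h z ∂D) - (m : ℝ)⁻¹ * ∑ i, L h (S i))) > ε →
      2⁻¹ ≤ ν (Prod.mk S ⁻¹' B') := by
    intro S hS
    obtain ⟨h, hhH, hh⟩ := sym_exists_of_lt_biSup hε.le hS
    have hRS0 : 0 ≤ (m : ℝ)⁻¹ * ∑ i, L h (S i) :=
      mul_nonneg (by positivity) (Finset.sum_nonneg fun i _ => (hL h _).1)
    have hfi : Integrable (L h) D := by
      by_contra hc
      rw [integral_undef hc] at hh
      linarith
    have hcheb := sym_cheb D n hn (L h) hfi (hL h) ε hε hnε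
    refine le_trans hcheb (measure_mono ?_)
    intro T hT
    simp only [Set.mem_setOf_eq] at hT
    refine hsub ?_
    show (S, T) ∈ B
    simp only [hB, Set.mem_setOf_eq]
    have hval : ε / 2 < (n : ℝ)⁻¹ * ∑ i, L h (T i) - (m : ℝ)⁻¹ * ∑ i, L h (S i) := by
      linarith
    refine lt_of_lt_of_le hval ?_
    refine sym_le_biSup
      (F := fun h' => (n : ℝ)⁻¹ * ∑ i, L h' (T i) - (m : ℝ)⁻¹ * ∑ i, L h' (S i)) ?_ hhH
    intro h'
    have hs1 : ∑ i, L h' (T i) ≤ (n : ℝ) := by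
      calc ∑ i, L h' (T i) ≤ ∑ _i : Fin n, (1:ℝ) := Finset.sum_le_sum fun i _ => (hL h' _).2
      _ = n := by simp
    have h1 : (n:ℝ)⁻¹ * ∑ i, L h' (T i) ≤ 1 := by
      calc (n:ℝ)⁻¹ * ∑ i, L h' (T i) ≤ (n:ℝ)⁻¹ * n :=
        mul_le_mul_of_nonneg_left hs1 (by positivity)
      _ = 1 := inv_mul_cancel₀ (ne_of_gt hn0)
    have h2 : 0 ≤ (m:ℝ)⁻¹ * ∑ i, L h' (S i) :=
      mul_nonneg (by positivity) (Finset.sum_nonneg fun i _ => (hL h' _).1)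
    linarith
  have hφ : Measurable fun S => ν (Prod.mk S ⁻¹' B') := measurable_measure_prodMk_left hB'm
  set G := {S : Fin m → Z | 2⁻¹ ≤ ν (Prod.mk S ⁻¹' B')} with hG
  have h1 : μ {S | (⨆ h ∈ H S, ((∫ z, L h z ∂D) - (m : ℝ)⁻¹ * ∑ i, L h (S i))) > ε} ≤ μ G :=
    measure_mono fun S hS => key S hS
  have h2 : 2⁻¹ * μ G ≤ (μ.prod ν) B' := by
    rw [Measure.prod_apply hB'm]
    calc 2⁻¹ * μ G = ∫⁻ _ in G, 2⁻¹ ∂μ := by rw [setLIntegral_const, mul_comm]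
    _ ≤ ∫⁻ S in G, ν (Prod.mk S ⁻¹' B') ∂μ := setLIntegral_mono hφ fun S hS => hS
    _ ≤ ∫⁻ S, ν (Prod.mk S ⁻¹' B') ∂μ := setLIntegral_le_lintegral _ _
  calc μ {S | (⨆ h ∈ H S, ((∫ z, L h z ∂D) - (m : ℝ)⁻¹ * ∑ i, L h (S i))) > ε} ≤ μ G := h1
  _ = 2 * (2⁻¹ * μ G) := by
      rw [← mul_assoc, ENNReal.mul_inv_cancel (by norm_num) (by norm_num), one_mul]
  _ ≤ 2 * (μ.prod ν) B' := mul_le_mul_right h2 2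
  _ = 2 * (μ.prod ν) B := by rw [hB'eq]
end

section
/- Fix U ∈ Z^{m+n}, and let (S,T) be a uniformly random partition of U into a subsample S of size m and its complement T of size n (sampling S without replacement from U). Then E_{(S,T)}[ sup_{h ∈ H̄_{U,m}} R̂_T(h) − R̂_S(h) ] ≤ ℜ̂°_{U,m}(G) + √( log(2e)·(m+n)³ / (2·(mn)²) ). In particular, for m = n the bound becomes ℜ̂°_{U,m}(G) + 2·√(log(2e)/m). -/
open MeasureTheory Finset

namespace Stmt7Aux

variable {N : ℕ}

/-- number of `false` coordinates -/
def cnt (σ : Fin N → Bool) : ℕ := #{i | σ i = false}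

def Sk (N k : ℕ) : Finset (Fin N → Bool) := {σ | cnt σ = k}

lemma card_Sk (N k : ℕ) : (Sk N k).card = N.choose k := by
  classical
  have : (Sk N k).card = (Finset.powersetCard k (Finset.univ : Finset (Fin N))).card := by
    apply Finset.card_bij' (fun σ _ => ({i | σ i = false} : Finset (Fin N)))
      (fun A _ => fun i => decide (i ∉ A))
    · intro σ hσ
      simp only [Sk, Finset.mem_filter, Finset.mem_univ, true_and] at hσ
      simp [Finset.mem_powersetCard_univ, ← hσ, cnt]
    · intro A hA
      simp only [Sk, Finset.mem_filter, Finset.mem_univ, true_and]; simp only [cnt]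
      rw [Finset.mem_powersetCard_univ] at hA
      rw [← hA]
      congr 1
      ext i
      simp
    · intro σ _
      funext i
      simp
    · intro A _
      ext i
      simp
  rw [this]
  simp [Finset.card_powersetCard]

end Stmt7Aux
namespace Stmt7Aux

noncomputable def T (f : (Fin N → Bool) → ℝ) (k : ℕ) : ℝ := ∑ σ ∈ Sk N k, f σ

noncomputable def g (f : (Fin N → Bool) → ℝ) (k : ℕ) : ℝ := ((N.choose k : ℝ))⁻¹ * T f k

lemma card_true {σ : Fin N → Bool} {k : ℕ} (hσ : σ ∈ Sk N k) :
    #({i | σ i = true} : Finset (Fin N)) = N - k := by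
  simp only [Sk, Finset.mem_filter, Finset.mem_univ, true_and] at hσ
  have h := Finset.card_filter_add_card_filter_not (s := (Finset.univ : Finset (Fin N)))
    (p := fun i => σ i = false)
  simp only [Finset.card_univ, Fintype.card_fin] at h
  have h2 : ({i | ¬ σ i = false} : Finset (Fin N)) = ({i | σ i = true} : Finset (Fin N)) := by
    ext i; simp
  rw [h2] at h
  unfold cnt at hσ
  omega

lemma filter_update_true (σ : Fin N → Bool) (i : Fin N) :
    ({j | Function.update σ i true j = false} : Finset (Fin N))
      = ({j | σ j = false} : Finset (Fin N)).erase i := by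
  ext j
  by_cases h : j = i
  · subst h; simp
  · simp [Function.update_of_ne h, h]

lemma filter_update_false (σ : Fin N → Bool) (i : Fin N) :
    ({j | Function.update σ i false j = false} : Finset (Fin N))
      = insert i ({j | σ j = false} : Finset (Fin N)) := by
  ext j
  by_cases h : j = i
  · subst h; simp
  · simp [Function.update_of_ne h, h]

lemma mem_update_false {σ : Fin N → Bool} {k : ℕ} (hσ : σ ∈ Sk N k) {i : Fin N}
    (hi : σ i = true) : Function.update σ i false ∈ Sk N (k + 1) := by
  simp only [Sk, Finset.mem_filter, Finset.mem_univ, true_and] at hσ ⊢; simp only [cnt] at hσ ⊢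
  rw [filter_update_false, Finset.card_insert_of_notMem (by simp [hi]), hσ]

lemma mem_update_true {σ : Fin N → Bool} {k : ℕ} (hσ : σ ∈ Sk N (k + 1)) {i : Fin N}
    (hi : σ i = false) : Function.update σ i true ∈ Sk N k := by
  simp only [Sk, Finset.mem_filter, Finset.mem_univ, true_and] at hσ ⊢; simp only [cnt] at hσ ⊢
  rw [filter_update_true, Finset.card_erase_of_mem (by simp [hi]), hσ]; omega

/-- double counting bijection -/
lemma sigma_reindex (F : ((_ : Fin N → Bool) × Fin N) → ℝ) (k : ℕ) :
    ∑ p ∈ (Sk N k).sigma (fun σ => ({i | σ i = true} : Finset (Fin N))),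
        F ⟨Function.update p.1 p.2 false, p.2⟩
      = ∑ q ∈ (Sk N (k+1)).sigma (fun σ => ({i | σ i = false} : Finset (Fin N))), F q := by
  apply Finset.sum_nbij' (i := fun p => ⟨Function.update p.1 p.2 false, p.2⟩)
    (j := fun q => ⟨Function.update q.1 q.2 true, q.2⟩)
  · rintro ⟨σ, i⟩ hp
    simp only [Finset.mem_sigma, Finset.mem_filter, Finset.mem_univ, true_and] at hp ⊢
    exact ⟨mem_update_false hp.1 hp.2, by simp⟩
  · rintro ⟨σ, i⟩ hq
    simp only [Finset.mem_sigma, Finset.mem_filter, Finset.mem_univ, true_and] at hq ⊢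
    exact ⟨mem_update_true hq.1 hq.2, by simp⟩
  · rintro ⟨σ, i⟩ hp
    simp only [Finset.mem_sigma, Finset.mem_filter, Finset.mem_univ, true_and] at hp
    simp only [Sigma.mk.inj_iff, heq_eq_eq]
    constructor
    · funext j
      by_cases h : j = i
      · subst h; simp [hp.2]
      · simp [Function.update_of_ne h]
    · trivial
  · rintro ⟨σ, i⟩ hq
    simp only [Finset.mem_sigma, Finset.mem_filter, Finset.mem_univ, true_and] at hq
    simp only [Sigma.mk.inj_iff, heq_eq_eq]
    constructor
    · funext j
      by_cases h : j = i
      · subst h; simp [hq.2]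
      · simp [Function.update_of_ne h]
    · trivial
  · rintro ⟨σ, i⟩ _
    rfl

end Stmt7Aux
namespace Stmt7Aux

lemma sum_sigma_true (h : (Fin N → Bool) → ℝ) (k : ℕ) :
    ∑ p ∈ (Sk N k).sigma (fun σ => ({i | σ i = true} : Finset (Fin N))), h p.1
      = ((N - k : ℕ) : ℝ) * ∑ σ ∈ Sk N k, h σ := by
  rw [Finset.sum_sigma, Finset.mul_sum]
  apply Finset.sum_congr rfl
  intro σ hσ
  have : ∑ _s ∈ ({i | σ i = true} : Finset (Fin N)), h σ = ((N - k : ℕ) : ℝ) * h σ := by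
    rw [Finset.sum_const, card_true hσ, nsmul_eq_mul]
  exact this

lemma sum_sigma_false (h : (Fin N → Bool) → ℝ) (k : ℕ) :
    ∑ q ∈ (Sk N (k+1)).sigma (fun σ => ({i | σ i = false} : Finset (Fin N))), h q.1
      = ((k + 1 : ℕ) : ℝ) * ∑ σ ∈ Sk N (k+1), h σ := by
  rw [Finset.sum_sigma, Finset.mul_sum]
  apply Finset.sum_congr rfl
  intro σ hσ
  simp only [Sk, Finset.mem_filter, Finset.mem_univ, true_and] at hσ; simp only [cnt] at hσ
  have : ∑ _s ∈ ({i | σ i = false} : Finset (Fin N)), h σ = ((k + 1 : ℕ) : ℝ) * h σ := by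
    rw [Finset.sum_const]
    rw [show #({i | σ i = false} : Finset (Fin N)) = k + 1 from hσ, nsmul_eq_mul]
  exact this

lemma g_step (f : (Fin N → Bool) → ℝ) (c : ℝ) (hc : 0 ≤ c)
    (hf : ∀ σ (i : Fin N) b, f (Function.update σ i b) ≤ f σ + c) (k : ℕ) (hk : k < N) :
    g f (k+1) ≤ g f k + c ∧ g f k ≤ g f (k+1) + c := by
  have hCk : (0:ℝ) < (N.choose k : ℝ) := by
    exact_mod_cast Nat.choose_pos hk.le
  have hCk1 : (0:ℝ) < (N.choose (k+1) : ℝ) := by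
    exact_mod_cast Nat.choose_pos hk
  have hb : (0:ℝ) < ((N - k : ℕ) : ℝ) := by
    have : 0 < N - k := by omega
    exact_mod_cast this
  have ha : (0:ℝ) < ((k + 1 : ℕ) : ℝ) := by positivity
  have hid : ((k+1:ℕ):ℝ) * (N.choose (k+1) : ℝ) = ((N-k:ℕ):ℝ) * (N.choose k : ℝ) := by
    have h := Nat.choose_succ_right_eq N k
    have : ((N.choose (k+1) * (k+1) : ℕ) : ℝ) = ((N.choose k * (N - k) : ℕ) : ℝ) := by
      exact_mod_cast congrArg (Nat.cast (R := ℝ)) h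
    push_cast at this
    push_cast
    linarith
  have I1 : ((k+1:ℕ):ℝ) * T f (k+1)
      ≤ ((N-k:ℕ):ℝ) * T f k + ((N-k:ℕ):ℝ) * ((N.choose k : ℝ) * c) := by
    rw [T, ← sum_sigma_false f k, ← sigma_reindex (fun q => f q.1) k]
    have step : ∑ p ∈ (Sk N k).sigma (fun σ => ({i | σ i = true} : Finset (Fin N))),
        f (Function.update p.1 p.2 false)
        ≤ ∑ p ∈ (Sk N k).sigma (fun σ => ({i | σ i = true} : Finset (Fin N))),
          (f p.1 + c) := by
      apply Finset.sum_le_sum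
      intro p _
      exact hf p.1 p.2 false
    refine step.trans ?_
    rw [sum_sigma_true (fun σ => f σ + c) k, Finset.sum_add_distrib, Finset.sum_const,
      card_Sk, nsmul_eq_mul]
    rw [mul_add]
    rfl
  have I2 : ((N-k:ℕ):ℝ) * T f k
      ≤ ((k+1:ℕ):ℝ) * T f (k+1) + ((k+1:ℕ):ℝ) * ((N.choose (k+1) : ℝ) * c) := by
    rw [T, ← sum_sigma_true f k]
    have e : ∑ p ∈ (Sk N k).sigma (fun σ => ({i | σ i = true} : Finset (Fin N))), f p.1
        = ∑ q ∈ (Sk N (k+1)).sigma (fun σ => ({i | σ i = false} : Finset (Fin N))),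
            f (Function.update q.1 q.2 true) := by
      rw [← sigma_reindex (fun q => f (Function.update q.1 q.2 true)) k]
      apply Finset.sum_congr rfl
      rintro ⟨σ, i⟩ hp
      simp only [Finset.mem_sigma, Finset.mem_filter, Finset.mem_univ, true_and] at hp
      simp only [Function.update_idem]
      congr 1
      funext j
      by_cases h : j = i
      · subst h; simp [hp.2]
      · simp [Function.update_of_ne h]
    rw [e]
    have step : ∑ q ∈ (Sk N (k+1)).sigma (fun σ => ({i | σ i = false} : Finset (Fin N))),
        f (Function.update q.1 q.2 true)
        ≤ ∑ q ∈ (Sk N (k+1)).sigma (fun σ => ({i | σ i = false} : Finset (Fin N))),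
          (f q.1 + c) := by
      apply Finset.sum_le_sum
      intro q _
      exact hf q.1 q.2 true
    refine step.trans ?_
    rw [sum_sigma_false (fun σ => f σ + c) k, Finset.sum_add_distrib, Finset.sum_const,
      card_Sk, nsmul_eq_mul]
    rw [mul_add]
    rfl
  constructor
  · have key : T f (k+1) * (N.choose k : ℝ) ≤ (T f k + (N.choose k : ℝ) * c) * (N.choose (k+1) : ℝ) := by
      have h4 : ((N-k:ℕ):ℝ) * (T f (k+1) * (N.choose k : ℝ))
          ≤ ((N-k:ℕ):ℝ) * ((T f k + (N.choose k : ℝ) * c) * (N.choose (k+1) : ℝ)) := by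
        calc ((N-k:ℕ):ℝ) * (T f (k+1) * (N.choose k : ℝ))
            = ((k+1:ℕ):ℝ) * T f (k+1) * (N.choose (k+1) : ℝ) := by
              linear_combination (-(T f (k+1))) * hid
          _ ≤ (((N-k:ℕ):ℝ) * T f k + ((N-k:ℕ):ℝ) * ((N.choose k : ℝ) * c)) * (N.choose (k+1) : ℝ) :=
              mul_le_mul_of_nonneg_right I1 hCk1.le
          _ = ((N-k:ℕ):ℝ) * ((T f k + (N.choose k : ℝ) * c) * (N.choose (k+1) : ℝ)) := by ring
      exact le_of_mul_le_mul_left h4 hb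
    have : g f (k+1) ≤ (T f k + (N.choose k : ℝ) * c) / (N.choose k : ℝ) := by
      rw [g, inv_mul_eq_div]
      exact (div_le_div_iff₀ hCk1 hCk).2 key
    refine this.trans ?_
    rw [add_div, mul_div_cancel_left₀ _ hCk.ne', g, inv_mul_eq_div]
  · have key : T f k * (N.choose (k+1) : ℝ) ≤ (T f (k+1) + (N.choose (k+1) : ℝ) * c) * (N.choose k : ℝ) := by
      have h4 : ((k+1:ℕ):ℝ) * (T f k * (N.choose (k+1) : ℝ))
          ≤ ((k+1:ℕ):ℝ) * ((T f (k+1) + (N.choose (k+1) : ℝ) * c) * (N.choose k : ℝ)) := by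
        calc ((k+1:ℕ):ℝ) * (T f k * (N.choose (k+1) : ℝ))
            = ((N-k:ℕ):ℝ) * T f k * (N.choose k : ℝ) := by
              linear_combination T f k * hid
          _ ≤ (((k+1:ℕ):ℝ) * T f (k+1) + ((k+1:ℕ):ℝ) * ((N.choose (k+1) : ℝ) * c)) * (N.choose k : ℝ) :=
              mul_le_mul_of_nonneg_right I2 hCk.le
          _ = ((k+1:ℕ):ℝ) * ((T f (k+1) + (N.choose (k+1) : ℝ) * c) * (N.choose k : ℝ)) := by ring
      exact le_of_mul_le_mul_left h4 ha
    have : g f k ≤ (T f (k+1) + (N.choose (k+1) : ℝ) * c) / (N.choose (k+1) : ℝ) := by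
      rw [g, inv_mul_eq_div]
      exact (div_le_div_iff₀ hCk hCk1).2 key
    refine this.trans ?_
    rw [add_div, mul_div_cancel_left₀ _ hCk1.ne', g, inv_mul_eq_div]

lemma g_lipschitz (f : (Fin N → Bool) → ℝ) (c : ℝ) (hc : 0 ≤ c)
    (hf : ∀ σ (i : Fin N) b, f (Function.update σ i b) ≤ f σ + c) :
    ∀ j k, j ≤ N → k ≤ N → |g f j - g f k| ≤ c * |(j:ℝ) - (k:ℝ)| := by
  have base : ∀ d k, k + d ≤ N → |g f (k + d) - g f k| ≤ c * d := by
    intro d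
    induction d with
    | zero => intro k _; simp
    | succ d ih =>
      intro k hkd
      have h1 := ih k (by omega)
      have h2 := g_step f c hc hf (k + d) (by omega)
      have : |g f (k + d + 1) - g f (k + d)| ≤ c := abs_sub_le_iff.2 ⟨by linarith [h2.1], by linarith [h2.2]⟩
      calc |g f (k + (d+1)) - g f k|
          ≤ |g f (k + d + 1) - g f (k + d)| + |g f (k + d) - g f k| := by
            have : k + (d + 1) = k + d + 1 := by omega
            rw [this]
            exact abs_sub_le _ _ _
        _ ≤ c + c * d := add_le_add this h1
        _ = c * (d + 1 : ℕ) := by push_cast; ring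
  intro j k hj hk
  rcases le_total k j with h | h
  · obtain ⟨d, rfl⟩ : ∃ d, j = k + d := ⟨j - k, by omega⟩
    have := base d k (by omega)
    calc |g f (k + d) - g f k| ≤ c * d := this
      _ = c * |((k+d : ℕ):ℝ) - (k:ℝ)| := by
        congr 1
        push_cast
        rw [add_sub_cancel_left, abs_of_nonneg (by positivity)]
  · obtain ⟨d, rfl⟩ : ∃ d, k = j + d := ⟨k - j, by omega⟩
    have := base d j (by omega)
    rw [abs_sub_comm] at this
    calc |g f j - g f (j + d)| ≤ c * d := this
      _ = c * |(j:ℝ) - ((j+d : ℕ):ℝ)| := by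
        congr 1
        push_cast
        rw [← neg_sub, abs_neg, add_sub_cancel_left, abs_of_nonneg (by positivity)]

end Stmt7Aux
namespace Stmt7Aux

lemma cnt_le (σ : Fin N → Bool) : cnt σ ≤ N := by
  calc cnt σ ≤ #(Finset.univ : Finset (Fin N)) := Finset.card_filter_le _ _
    _ = N := by simp

lemma group_sum (w : ℕ → ℝ) (f : (Fin N → Bool) → ℝ) :
    ∑ σ : Fin N → Bool, w (cnt σ) * f σ = ∑ k ∈ Finset.range (N+1), w k * T f k := by
  rw [← Finset.sum_fiberwise_of_maps_to (g := cnt) (t := Finset.range (N+1))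
    (fun σ _ => Finset.mem_range.2 (Nat.lt_succ_of_le (cnt_le σ)))]
  apply Finset.sum_congr rfl
  intro k _
  rw [T, Finset.mul_sum]
  apply Finset.sum_congr rfl
  intro σ hσ
  simp only [Sk, Finset.mem_filter] at hσ
  rw [hσ.2]

lemma prod_weight (m n : ℕ) (hmn : N = m + n) (σ : Fin N → Bool) :
    (∏ i, if σ i then (n : ℝ) / (m + n) else (m : ℝ) / (m + n))
      = ((m : ℝ) / (m + n)) ^ (cnt σ) * ((n : ℝ) / (m + n)) ^ (N - cnt σ) := by
  rw [Finset.prod_ite (fun _ => (n : ℝ) / (m+n)) (fun _ => (m : ℝ) / (m+n)),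
    Finset.prod_const, Finset.prod_const]
  have h1 : ({i | ¬ σ i = true} : Finset (Fin N)) = ({i | σ i = false} : Finset (Fin N)) := by
    ext i; simp
  rw [h1]
  have h2 : #({i | σ i = true} : Finset (Fin N)) = N - cnt σ := by
    have h := Finset.card_filter_add_card_filter_not
      (s := (Finset.univ : Finset (Fin N))) (p := fun i => σ i = false)
    simp only [Finset.card_univ, Fintype.card_fin] at h
    have h2' : ({i | ¬ σ i = false} : Finset (Fin N)) = ({i | σ i = true} : Finset (Fin N)) := by
      ext i; simp
    rw [h2'] at h
    have := cnt_le σ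
    unfold cnt at *
    omega
  rw [h2]
  exact mul_comm _ _

lemma bernstein_eval (p : ℝ) (N ν : ℕ) :
    Polynomial.eval p (bernsteinPolynomial ℝ N ν)
      = (N.choose ν : ℝ) * p ^ ν * (1 - p) ^ (N - ν) := by
  simp [bernsteinPolynomial, mul_comm, mul_assoc, mul_left_comm]

lemma binom_sum_one (p : ℝ) (N : ℕ) :
    ∑ k ∈ Finset.range (N+1), (N.choose k : ℝ) * p ^ k * (1 - p) ^ (N - k) = 1 := by
  have h := bernsteinPolynomial.sum ℝ N
  have := congrArg (Polynomial.eval p) h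
  simpa [Polynomial.eval_finset_sum, bernstein_eval] using this

lemma binom_variance (p : ℝ) (N : ℕ) :
    ∑ k ∈ Finset.range (N+1), ((N : ℝ) * p - k) ^ 2
        * ((N.choose k : ℝ) * p ^ k * (1 - p) ^ (N - k))
      = (N : ℝ) * p * (1 - p) := by
  have h := bernsteinPolynomial.variance ℝ N
  have := congrArg (Polynomial.eval p) h
  simp only [Polynomial.eval_finset_sum, Polynomial.eval_mul, Polynomial.eval_pow,
    Polynomial.eval_sub, Polynomial.eval_natCast, Polynomial.eval_X, Polynomial.eval_one,
    nsmul_eq_mul, Polynomial.eval_smul, smul_eq_mul] at this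
  rw [← this]
  apply Finset.sum_congr rfl
  intro k _
  rw [bernstein_eval]

end Stmt7Aux
namespace Stmt7Aux

lemma weighted_abs_le_sqrt {s : Finset ℕ} (p x : ℕ → ℝ) (hp : ∀ k ∈ s, 0 ≤ p k)
    (h1 : ∑ k ∈ s, p k = 1) :
    ∑ k ∈ s, p k * |x k| ≤ Real.sqrt (∑ k ∈ s, p k * (x k) ^ 2) := by
  have cs := Finset.sum_mul_sq_le_sq_mul_sq s (fun k => Real.sqrt (p k))
    (fun k => Real.sqrt (p k) * |x k|)
  have e1 : ∀ k ∈ s, Real.sqrt (p k) * (Real.sqrt (p k) * |x k|) = p k * |x k| := by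
    intro k hk
    rw [← mul_assoc, Real.mul_self_sqrt (hp k hk)]
  have e2 : ∀ k ∈ s, Real.sqrt (p k) ^ 2 = p k := fun k hk => Real.sq_sqrt (hp k hk)
  have e3 : ∀ k ∈ s, (Real.sqrt (p k) * |x k|) ^ 2 = p k * (x k) ^ 2 := by
    intro k hk
    rw [mul_pow, Real.sq_sqrt (hp k hk), sq_abs]
  rw [Finset.sum_congr rfl e1, Finset.sum_congr rfl e2, Finset.sum_congr rfl e3, h1, one_mul] at cs
  have hnn : 0 ≤ ∑ k ∈ s, p k * |x k| :=
    Finset.sum_nonneg fun k hk => mul_nonneg (hp k hk) (abs_nonneg _)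
  calc ∑ k ∈ s, p k * |x k| = Real.sqrt ((∑ k ∈ s, p k * |x k|) ^ 2) := by
        rw [Real.sqrt_sq hnn]
    _ ≤ Real.sqrt (∑ k ∈ s, p k * (x k) ^ 2) := Real.sqrt_le_sqrt cs

end Stmt7Aux

/-- Transductive Rademacher complexity `ℜ̂°_{U,m}(G)` for a supersample `U ∈ Z^{m+n}`:
`E_σ[ sup_{h ∈ H̄_{U,m}} (1/(m+n)) Σ_i σ_i L(h, z^U_i) ]`, where the `σ_i` are i.i.d.,
taking value `(m+n)/n` with probability `n/(m+n)` (encoded `true`) and `-(m+n)/m` with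
probability `m/(m+n)` (encoded `false`), and `H̄_{U,m}` is the union of the hypothesis
sets `H S` over all subsamples `S` of `U` of size `m`. -/
noncomputable def transRad {Z Hyp : Type*} (m n : ℕ) (H : (Fin m → Z) → Set Hyp)
    (L : Hyp → Z → ℝ) (U : Fin (m + n) → Z) : ℝ :=
  ∑ σ : Fin (m + n) → Bool,
    (∏ i, if σ i then (n : ℝ) / (m + n) else (m : ℝ) / (m + n)) *
      ⨆ h ∈ ⋃ φ : Fin m ↪ Fin (m + n), H (fun i => U (φ i)),
        ((m : ℝ) + n)⁻¹ *
          ∑ i, (if σ i then ((m : ℝ) + n) / n else -(((m : ℝ) + n) / m)) * L h (U i)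

/-- Expectation, over a uniformly random partition of `U` into a size-`m` subsample `S`
(indexed by a uniformly random `A ⊆ [m+n]` with `|A| = m`) and its complement `T`, of
`sup_{h ∈ H̄_{U,m}} R̂_T(h) - R̂_S(h)`. -/
noncomputable def partitionGap {Z Hyp : Type*} (m n : ℕ) (H : (Fin m → Z) → Set Hyp)
    (L : Hyp → Z → ℝ) (U : Fin (m + n) → Z) : ℝ :=
  (((m + n).choose m : ℝ))⁻¹ *
    ∑ A ∈ Finset.powersetCard m (Finset.univ : Finset (Fin (m + n))),
      ⨆ h ∈ ⋃ φ : Fin m ↪ Fin (m + n), H (fun i => U (φ i)),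
        ((n : ℝ)⁻¹ * ∑ i ∈ Aᶜ, L h (U i) - (m : ℝ)⁻¹ * ∑ i ∈ A, L h (U i))

namespace Stmt7Aux

variable {Z Hyp : Type*}

def HU (m n : ℕ) (H : (Fin m → Z) → Set Hyp) (U : Fin (m + n) → Z) : Set Hyp :=
  ⋃ φ : Fin m ↪ Fin (m + n), H (fun i => U (φ i))

noncomputable def vv (m n : ℕ) (L : Hyp → Z → ℝ) (U : Fin (m + n) → Z)
    (σ : Fin (m + n) → Bool) (h : Hyp) : ℝ :=
  ((m : ℝ) + n)⁻¹ *
    ∑ i, (if σ i then ((m : ℝ) + n) / n else -(((m : ℝ) + n) / m)) * L h (U i)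

noncomputable def ff (m n : ℕ) (H : (Fin m → Z) → Set Hyp) (L : Hyp → Z → ℝ)
    (U : Fin (m + n) → Z) (σ : Fin (m + n) → Bool) : ℝ :=
  ⨆ h ∈ HU m n H U, vv m n L U σ h

section Concrete

variable (m n : ℕ) (hm : 0 < m) (hn : 0 < n) (H : (Fin m → Z) → Set Hyp) (L : Hyp → Z → ℝ)
  (hL : ∀ h z, L h z ∈ Set.Icc (0 : ℝ) 1) (U : Fin (m + n) → Z)

lemma transRad_eq : transRad m n H L U
    = ∑ σ : Fin (m + n) → Bool,
        (∏ i, if σ i then (n : ℝ) / (m + n) else (m : ℝ) / (m + n)) * ff m n H L U σ := rfl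

lemma partitionGap_eq : partitionGap m n H L U
    = (((m + n).choose m : ℝ))⁻¹ *
        ∑ A ∈ Finset.powersetCard m (Finset.univ : Finset (Fin (m + n))),
          ⨆ h ∈ HU m n H U,
            ((n : ℝ)⁻¹ * ∑ i ∈ Aᶜ, L h (U i) - (m : ℝ)⁻¹ * ∑ i ∈ A, L h (U i)) := rfl

include hn hL in
lemma vv_le (σ : Fin (m + n) → Bool) (h : Hyp) :
    vv m n L U σ h ≤ ((m : ℝ) + n) / n := by
  have hN : (0:ℝ) < (m : ℝ) + n := by
    have : (0:ℝ) < (n:ℝ) := by exact_mod_cast hn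
    positivity
  rw [vv]
  have hterm : ∀ i, (if σ i then ((m : ℝ) + n) / n else -(((m : ℝ) + n) / m)) * L h (U i)
      ≤ ((m : ℝ) + n) / n := by
    intro i
    have h1 := (hL h (U i)).1
    have h2 := (hL h (U i)).2
    have hnn : (0:ℝ) ≤ ((m : ℝ) + n) / n := by positivity
    by_cases hb : σ i
    · simp only [hb, if_true]
      calc ((m : ℝ) + n) / n * L h (U i) ≤ ((m : ℝ) + n) / n * 1 :=
            mul_le_mul_of_nonneg_left h2 hnn
        _ = ((m : ℝ) + n) / n := mul_one _
    · rw [if_neg hb]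
      have hmm : (0:ℝ) ≤ ((m : ℝ) + n) / m := by positivity
      have : -(((m : ℝ) + n) / m) * L h (U i) ≤ 0 := by
        apply mul_nonpos_of_nonpos_of_nonneg _ h1
        linarith
      linarith
  calc ((m : ℝ) + n)⁻¹ * ∑ i, (if σ i then ((m : ℝ) + n) / n else -(((m : ℝ) + n) / m)) * L h (U i)
      ≤ ((m : ℝ) + n)⁻¹ * ∑ _i : Fin (m + n), ((m : ℝ) + n) / n := by
        apply mul_le_mul_of_nonneg_left (Finset.sum_le_sum fun i _ => hterm i) (by positivity)
    _ = ((m : ℝ) + n) / n := by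
        rw [Finset.sum_const, Finset.card_univ, Fintype.card_fin, nsmul_eq_mul]
        push_cast
        field_simp

include hn hL in
lemma bdd (σ : Fin (m + n) → Bool) :
    BddAbove (Set.range fun h => ⨆ _ : h ∈ HU m n H U, vv m n L U σ h) := by
  refine ⟨((m : ℝ) + n) / n, ?_⟩
  rintro _ ⟨h, rfl⟩
  dsimp only
  by_cases hh : h ∈ HU m n H U
  · have e : (⨆ _ : h ∈ HU m n H U, vv m n L U σ h) = vv m n L U σ h := ciSup_pos hh
    rw [e]
    exact vv_le m n hn L hL U σ h
  · have : IsEmpty (h ∈ HU m n H U) := by simpa using hh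
    rw [Real.iSup_of_isEmpty]
    have : (0:ℝ) < (n:ℝ) := by exact_mod_cast hn
    positivity

include hn hL in
lemma vv_le_ff {h : Hyp} (hh : h ∈ HU m n H U) (σ : Fin (m + n) → Bool) :
    vv m n L U σ h ≤ ff m n H L U σ := by
  have e : (⨆ _ : h ∈ HU m n H U, vv m n L U σ h) = vv m n L U σ h := ciSup_pos hh
  calc vv m n L U σ h = ⨆ _ : h ∈ HU m n H U, vv m n L U σ h := e.symm
    _ ≤ ff m n H L U σ := le_ciSup (bdd m n hn H L hL U σ) h

include hn hL in
lemma ff_le_add {h₀ : Hyp} (hh₀ : h₀ ∈ HU m n H U) {c : ℝ} (hc : 0 ≤ c)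
    {σ σ' : Fin (m + n) → Bool}
    (hv : ∀ h ∈ HU m n H U, vv m n L U σ' h ≤ vv m n L U σ h + c) :
    ff m n H L U σ' ≤ ff m n H L U σ + c := by
  have : Nonempty Hyp := ⟨h₀⟩
  apply ciSup_le
  intro h
  by_cases hh : h ∈ HU m n H U
  · have e : (⨆ _ : h ∈ HU m n H U, vv m n L U σ' h) = vv m n L U σ' h := ciSup_pos hh
    rw [e]
    exact (hv h hh).trans (by linarith [vv_le_ff m n hn H L hL U hh σ])
  · have he : IsEmpty (h ∈ HU m n H U) := by simpa using hh
    rw [Real.iSup_of_isEmpty]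
    have h0 : (0:ℝ) ≤ ff m n H L U σ := by
      have h1 : (⨆ _ : h ∈ HU m n H U, vv m n L U σ h) ≤ ff m n H L U σ :=
        le_ciSup (bdd m n hn H L hL U σ) h
      rwa [Real.iSup_of_isEmpty] at h1
    linarith

include hm hn hL in
lemma vv_lip (σ : Fin (m + n) → Bool) (i : Fin (m + n)) (b : Bool) (h : Hyp) :
    vv m n L U (Function.update σ i b) h ≤ vv m n L U σ h + ((1 : ℝ)/m + 1/n) := by
  have hm' : (0:ℝ) < (m:ℝ) := by exact_mod_cast hm
  have hn' : (0:ℝ) < (n:ℝ) := by exact_mod_cast hn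
  have hN : (0:ℝ) < (m : ℝ) + n := by positivity
  set coef : Bool → ℝ := fun t => if t then ((m : ℝ) + n) / n else -(((m : ℝ) + n) / m) with hcoef
  have key : vv m n L U (Function.update σ i b) h - vv m n L U σ h
      = ((m : ℝ) + n)⁻¹ * ((coef b - coef (σ i)) * L h (U i)) := by
    rw [vv, vv, ← mul_sub, ← Finset.sum_sub_distrib]
    congr 1
    rw [Finset.sum_eq_single_of_mem i (Finset.mem_univ i)]
    · rw [Function.update_self, ← sub_mul]
    · intro j _ hj
      rw [Function.update_of_ne hj, sub_self]
  have hcb : (coef b - coef (σ i)) * L h (U i) ≤ ((m : ℝ) + n) / n + ((m : ℝ) + n) / m := by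
    have h1 := (hL h (U i)).1
    have h2 := (hL h (U i)).2
    have hsum : (0:ℝ) ≤ ((m : ℝ) + n) / n + ((m : ℝ) + n) / m := by positivity
    have hb1 : (0:ℝ) ≤ ((m : ℝ) + n) / n := by positivity
    have hb2 : (0:ℝ) ≤ ((m : ℝ) + n) / m := by positivity
    have hub : ∀ t : Bool, coef t ≤ ((m : ℝ) + n) / n := by
      intro t
      rcases t <;> simp [hcoef] <;> linarith
    have hlb : ∀ t : Bool, -(((m : ℝ) + n) / m) ≤ coef t := by
      intro t
      rcases t <;> simp [hcoef] <;> linarith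
    have hd : coef b - coef (σ i) ≤ ((m : ℝ) + n) / n + ((m : ℝ) + n) / m := by
      have := hub b
      have := hlb (σ i)
      linarith
    rcases le_or_gt (coef b - coef (σ i)) 0 with hd0 | hd0
    · have := mul_nonpos_of_nonpos_of_nonneg hd0 h1
      linarith
    · calc (coef b - coef (σ i)) * L h (U i) ≤ (coef b - coef (σ i)) * 1 :=
          mul_le_mul_of_nonneg_left h2 hd0.le
        _ ≤ _ := by rw [mul_one]; exact hd
  have hfin : ((m : ℝ) + n)⁻¹ * (((m : ℝ) + n) / n + ((m : ℝ) + n) / m) = (1 : ℝ)/m + 1/n := by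
    field_simp
    ring
  have : vv m n L U (Function.update σ i b) h - vv m n L U σ h ≤ (1 : ℝ)/m + 1/n := by
    rw [key, ← hfin]
    exact mul_le_mul_of_nonneg_left hcb (by positivity)
  linarith

include hm hn hL in
lemma ff_lip {h₀ : Hyp} (hh₀ : h₀ ∈ HU m n H U) (σ : Fin (m + n) → Bool) (i : Fin (m + n))
    (b : Bool) :
    ff m n H L U (Function.update σ i b) ≤ ff m n H L U σ + ((1 : ℝ)/m + 1/n) := by
  have hm' : (0:ℝ) < (m:ℝ) := by exact_mod_cast hm
  have hn' : (0:ℝ) < (n:ℝ) := by exact_mod_cast hn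
  exact ff_le_add m n hn H L hL U hh₀ (by positivity)
    (fun h _ => vv_lip m n hm hn L hL U σ i b h)

include hm hn in
lemma vv_partition (A : Finset (Fin (m + n))) (h : Hyp) :
    vv m n L U (fun i => decide (i ∉ A)) h
      = (n : ℝ)⁻¹ * ∑ i ∈ Aᶜ, L h (U i) - (m : ℝ)⁻¹ * ∑ i ∈ A, L h (U i) := by
  have hm' : (0:ℝ) < (m:ℝ) := by exact_mod_cast hm
  have hn' : (0:ℝ) < (n:ℝ) := by exact_mod_cast hn
  have hN : ((m : ℝ) + n) ≠ 0 := by positivity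
  rw [vv, ← Finset.sum_add_sum_compl A]
  have e1 : ∀ i ∈ A, (if (decide (i ∉ A) : Bool) then ((m : ℝ) + n) / n
      else -(((m : ℝ) + n) / m)) * L h (U i) = -(((m : ℝ) + n) / m) * L h (U i) := by
    intro i hi
    rw [if_neg (by simpa using hi)]
  have e2 : ∀ i ∈ Aᶜ, (if (decide (i ∉ A) : Bool) then ((m : ℝ) + n) / n
      else -(((m : ℝ) + n) / m)) * L h (U i) = (((m : ℝ) + n) / n) * L h (U i) := by
    intro i hi
    rw [if_pos (by simpa using hi)]
  rw [Finset.sum_congr rfl e1, Finset.sum_congr rfl e2]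
  rw [← Finset.mul_sum, ← Finset.mul_sum]
  field_simp
  ring

include hm hn in
lemma partitionGap_eq_g :
    partitionGap m n H L U = g (ff m n H L U) m := by
  rw [partitionGap_eq, g, T]
  congr 1
  apply Finset.sum_nbij' (i := fun A => fun i => decide (i ∉ A))
    (j := fun σ => ({i | σ i = false} : Finset (Fin (m + n))))
  · intro A hA
    rw [Finset.mem_powersetCard_univ] at hA
    simp only [Sk, Finset.mem_filter, Finset.mem_univ, true_and]; simp only [cnt]
    have e : ({i | (decide (i ∉ A) : Bool) = false} : Finset (Fin (m + n))) = A := by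
      ext i; simp
    rw [e, hA]
  · intro σ hσ
    simp only [Sk, Finset.mem_filter, Finset.mem_univ, true_and] at hσ; simp only [cnt] at hσ
    simp [Finset.mem_powersetCard_univ, ← hσ]
  · intro A _
    ext i
    simp
  · intro σ _
    funext i
    simp
  · intro A _
    rw [ff]
    congr 1
    funext h
    congr 1
    funext hh
    exact (vv_partition m n hm hn L U A h).symm

omit hm hn in
lemma transRad_eq_sum :
    transRad m n H L U
      = ∑ k ∈ Finset.range (m + n + 1),
          (((m : ℝ) / (m + n)) ^ k * ((n : ℝ) / (m + n)) ^ (m + n - k)) * T (ff m n H L U) k := by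
  rw [transRad_eq, ← group_sum]
  apply Finset.sum_congr rfl
  intro σ _
  rw [prod_weight m n rfl σ]

lemma ff_empty (he : HU m n H U = ∅) (σ : Fin (m + n) → Bool) : ff m n H L U σ = 0 := by
  have : ∀ h : Hyp, (⨆ _ : h ∈ HU m n H U, vv m n L U σ h) = 0 := by
    intro h
    have : IsEmpty (h ∈ HU m n H U) := by simp [he]
    rw [Real.iSup_of_isEmpty]
  rw [ff]
  rcases isEmpty_or_nonempty Hyp with hE | hE
  · rw [Real.iSup_of_isEmpty]
  · exact (iSup_congr this).trans ciSup_const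

end Concrete

end Stmt7Aux
set_option maxHeartbeats 1000000 in
/-- The expected transductive gap is bounded by the transductive Rademacher complexity
plus `√(log(2e) (m+n)³ / (2 (mn)²))`; in particular for `m = n` the additive term is
`2 √(log(2e)/m)`. -/
theorem stmt7 {Z Hyp : Type*} (m n : ℕ) (hm : 0 < m) (hn : 0 < n)
    (H : (Fin m → Z) → Set Hyp) (L : Hyp → Z → ℝ)
    (hL : ∀ h z, L h z ∈ Set.Icc (0 : ℝ) 1)
    (U : Fin (m + n) → Z) :
    partitionGap m n H L U
      ≤ transRad m n H L U
        + Real.sqrt (Real.log (2 * Real.exp 1) * ((m : ℝ) + n) ^ 3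
            / (2 * ((m : ℝ) * n) ^ 2))
    ∧ (m = n →
        partitionGap m n H L U
          ≤ transRad m n H L U + 2 * Real.sqrt (Real.log (2 * Real.exp 1) / m)) := by
  classical
  open Stmt7Aux in
  have hm' : (0:ℝ) < (m:ℝ) := by exact_mod_cast hm
  have hn' : (0:ℝ) < (n:ℝ) := by exact_mod_cast hn
  have hN' : (0:ℝ) < (m:ℝ) + n := by positivity
  have hlog : 1 ≤ Real.log (2 * Real.exp 1) := by
    rw [Real.log_mul two_ne_zero (Real.exp_ne_zero 1), Real.log_exp]
    have := Real.log_nonneg one_le_two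
    linarith
  have main : partitionGap m n H L U
      ≤ transRad m n H L U
        + Real.sqrt (Real.log (2 * Real.exp 1) * ((m : ℝ) + n) ^ 3
            / (2 * ((m : ℝ) * n) ^ 2)) := by
    by_cases hHU : HU m n H U = ∅
    · have h1 : partitionGap m n H L U = 0 := by
        rw [partitionGap_eq_g m n hm hn H L U, g, T,
          Finset.sum_congr rfl (fun σ _ => ff_empty m n H L U hHU σ)]
        simp
      have h2 : transRad m n H L U = 0 := by
        rw [transRad_eq]
        apply Finset.sum_eq_zero
        intro σ _
        rw [ff_empty m n H L U hHU σ, mul_zero]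
      rw [h1, h2]
      have := Real.sqrt_nonneg (Real.log (2 * Real.exp 1) * ((m : ℝ) + n) ^ 3
        / (2 * ((m : ℝ) * n) ^ 2))
      linarith
    · obtain ⟨h₀, hh₀⟩ := Set.nonempty_iff_ne_empty.2 hHU
      set c : ℝ := 1/(m:ℝ) + 1/(n:ℝ) with hc_def
      have hc : 0 ≤ c := by positivity
      have hf : ∀ (σ : Fin (m+n) → Bool) (i : Fin (m+n)) (b : Bool),
          ff m n H L U (Function.update σ i b) ≤ ff m n H L U σ + c :=
        fun σ i b => ff_lip m n hm hn H L hL U hh₀ σ i b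
      set P : ℝ := (m:ℝ)/((m:ℝ)+(n:ℝ)) with hP
      have hp1 : 1 - P = (n:ℝ)/((m:ℝ)+(n:ℝ)) := by
        rw [hP]; field_simp; ring
      have hNp : (((m+n : ℕ)):ℝ) * P = (m:ℝ) := by
        rw [hP]; push_cast; field_simp
      have hPk_nonneg : ∀ k, 0 ≤ ((m+n).choose k : ℝ) * P^k * (1-P)^(m+n-k) := by
        intro k
        have h1 : (0:ℝ) ≤ P := by rw [hP]; positivity
        have h2 : (0:ℝ) ≤ 1 - P := by rw [hp1]; positivity
        positivity
      have hPk_sum : ∑ k ∈ Finset.range (m+n+1),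
          ((m+n).choose k : ℝ) * P^k * (1-P)^(m+n-k) = 1 := binom_sum_one P (m+n)
      have hvar : ∑ k ∈ Finset.range (m+n+1),
          ((m+n).choose k : ℝ) * P^k * (1-P)^(m+n-k) * ((m:ℝ) - k)^2
            = (m:ℝ)*(n:ℝ)/((m:ℝ)+(n:ℝ)) := by
        have h := binom_variance P (m+n)
        rw [hNp] at h
        have e2 : (m:ℝ)*(1-P) = (m:ℝ)*(n:ℝ)/((m:ℝ)+(n:ℝ)) := by
          rw [hp1]; ring
        rw [e2] at h
        rw [← h]
        exact Finset.sum_congr rfl fun k _ => mul_comm _ _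
      have key1 : partitionGap m n H L U = g (ff m n H L U) m :=
        partitionGap_eq_g m n hm hn H L U
      have key2 : transRad m n H L U
          = ∑ k ∈ Finset.range (m+n+1), (P^k * (1-P)^(m+n-k)) * T (ff m n H L U) k := by
        rw [transRad_eq_sum m n H L U]
        apply Finset.sum_congr rfl
        intro k _
        rw [hp1, ← hP]
      have hglip := g_lipschitz (ff m n H L U) c hc hf
      have step1 : g (ff m n H L U) m
          ≤ ∑ k ∈ Finset.range (m+n+1),
              (((m+n).choose k : ℝ) * P^k * (1-P)^(m+n-k)) *
                (g (ff m n H L U) k + c * |(m:ℝ) - (k:ℝ)|) := by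
        calc g (ff m n H L U) m
            = ∑ k ∈ Finset.range (m+n+1),
                (((m+n).choose k : ℝ) * P^k * (1-P)^(m+n-k)) * g (ff m n H L U) m := by
              rw [← Finset.sum_mul, hPk_sum, one_mul]
          _ ≤ _ := by
              apply Finset.sum_le_sum
              intro k hk
              apply mul_le_mul_of_nonneg_left _ (hPk_nonneg k)
              have hkN : k ≤ m + n := by
                have := Finset.mem_range.1 hk; omega
              have := hglip m k (Nat.le_add_right m n) hkN
              have habs := abs_sub_le_iff.1 this
              linarith [habs.1]
      have step2 : ∑ k ∈ Finset.range (m+n+1),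
            (((m+n).choose k : ℝ) * P^k * (1-P)^(m+n-k)) *
              (g (ff m n H L U) k + c * |(m:ℝ) - (k:ℝ)|)
          = transRad m n H L U
            + c * ∑ k ∈ Finset.range (m+n+1),
                (((m+n).choose k : ℝ) * P^k * (1-P)^(m+n-k)) * |(m:ℝ) - (k:ℝ)| := by
        rw [key2]
        rw [Finset.mul_sum, ← Finset.sum_add_distrib]
        apply Finset.sum_congr rfl
        intro k hk
        have hkN : k ≤ m + n := by
          have := Finset.mem_range.1 hk; omega
        have hch : ((m+n).choose k : ℝ) ≠ 0 := by
          exact_mod_cast (Nat.choose_pos hkN).ne'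
        rw [g, T]
        field_simp
      have step3 : ∑ k ∈ Finset.range (m+n+1),
            (((m+n).choose k : ℝ) * P^k * (1-P)^(m+n-k)) * |(m:ℝ) - (k:ℝ)|
          ≤ Real.sqrt ((m:ℝ)*(n:ℝ)/((m:ℝ)+(n:ℝ))) := by
        have := weighted_abs_le_sqrt
          (fun k => ((m+n).choose k : ℝ) * P^k * (1-P)^(m+n-k))
          (fun k => (m:ℝ) - (k:ℝ)) (fun k _ => hPk_nonneg k) hPk_sum
        rw [Finset.sum_congr rfl (fun k (_ : k ∈ Finset.range (m+n+1)) => rfl), hvar] at this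
        exact this
      have hnum : c * Real.sqrt ((m:ℝ)*(n:ℝ)/((m:ℝ)+(n:ℝ)))
          ≤ Real.sqrt (Real.log (2 * Real.exp 1) * ((m : ℝ) + n) ^ 3
              / (2 * ((m : ℝ) * n) ^ 2)) := by
        have h1 : c * Real.sqrt ((m:ℝ)*(n:ℝ)/((m:ℝ)+(n:ℝ)))
            = Real.sqrt (c^2 * ((m:ℝ)*(n:ℝ)/((m:ℝ)+(n:ℝ)))) := by
          rw [Real.sqrt_mul (by positivity), Real.sqrt_sq hc]
        rw [h1]
        apply Real.sqrt_le_sqrt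
        have e : c^2 * ((m:ℝ)*(n:ℝ)/((m:ℝ)+(n:ℝ))) = ((m:ℝ)+(n:ℝ))/((m:ℝ)*(n:ℝ)) := by
          rw [hc_def]; field_simp; ring
        rw [e, div_le_div_iff₀ (by positivity) (by positivity)]
        have h2 : 2*((m:ℝ)*n) ≤ ((m:ℝ)+n)^2 := by nlinarith [sq_nonneg ((m:ℝ)-n)]
        have h3 : ((m:ℝ)+n)^2 ≤ Real.log (2 * Real.exp 1) * ((m:ℝ)+n)^2 := by
          nlinarith [sq_nonneg ((m:ℝ)+n)]
        have h4 := mul_le_mul_of_nonneg_right (h2.trans h3)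
          (show (0:ℝ) ≤ ((m:ℝ)*n)*((m:ℝ)+n) by positivity)
        calc ((m:ℝ)+n) * (2*((m:ℝ)*n)^2) = 2*((m:ℝ)*n)*(((m:ℝ)*n)*((m:ℝ)+n)) := by ring
          _ ≤ (Real.log (2 * Real.exp 1)*((m:ℝ)+n)^2)*(((m:ℝ)*n)*((m:ℝ)+n)) := h4
          _ = Real.log (2 * Real.exp 1)*((m:ℝ)+n)^3*((m:ℝ)*n) := by ring
      calc partitionGap m n H L U = g (ff m n H L U) m := key1
        _ ≤ _ := step1
        _ = transRad m n H L U + c * ∑ k ∈ Finset.range (m+n+1),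
              (((m+n).choose k : ℝ) * P^k * (1-P)^(m+n-k)) * |(m:ℝ) - (k:ℝ)| := step2
        _ ≤ transRad m n H L U + c * Real.sqrt ((m:ℝ)*(n:ℝ)/((m:ℝ)+(n:ℝ))) := by
            have := mul_le_mul_of_nonneg_left step3 hc
            linarith
        _ ≤ _ := by linarith [hnum]
  refine ⟨main, fun heq => ?_⟩
  subst heq
  have e : Real.sqrt (Real.log (2 * Real.exp 1) * ((m : ℝ) + m) ^ 3
        / (2 * ((m : ℝ) * m) ^ 2))
      = 2 * Real.sqrt (Real.log (2 * Real.exp 1) / m) := by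
    have h4 : Real.log (2 * Real.exp 1) * ((m : ℝ) + m) ^ 3 / (2 * ((m : ℝ) * m) ^ 2)
        = 4 * (Real.log (2 * Real.exp 1) / m) := by
      field_simp
      ring
    rw [h4, show (4:ℝ) = 2^2 by norm_num, Real.sqrt_mul (by norm_num), Real.sqrt_sq (by norm_num)]
  rw [← e]
  exact main
end

section
/- For each sample S = (x^S_1,...,x^S_m) of points in ℝ^N, let H_S = { x ↦ w·x : w = Σ_{i=1}^m α_i x^S_i with ‖α‖₁ ≤ Λ₁ } for a fixed Λ₁ ≥ 0. For samples S, T ∈ (ℝ^N)^m, set r_T = √( (Σ_{i=1}^m ‖x^T_i‖₂²)/m ) and r_{S∪T} = max_{x ∈ S∪T} ‖x‖₂. Then the empirical data-dependent Rademacher complexity satisfies ℜ̂°_{S,T}(H) ≤ r_T · r_{S∪T} · Λ₁ · √(2·log(4m)/m) ≤ r_{S∪T}² · Λ₁ · √(2·log(4m)/m). -/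
open MeasureTheory Finset

lemma expSumAux {m : ℕ} (a : Fin m → ℝ) :
    (2 ^ m : ℝ)⁻¹ * ∑ σ : Fin m → Bool,
        Real.exp (∑ i, (if σ i then (1:ℝ) else -1) * a i)
      ≤ Real.exp ((∑ i, (a i) ^ 2) / 2) := by
  have h1 : ∑ σ : Fin m → Bool, Real.exp (∑ i, (if σ i then (1:ℝ) else -1) * a i)
      = ∏ i, (Real.exp (a i) + Real.exp (-a i)) := by
    have := Finset.sum_prod_piFinset (κ := Bool) (ι := Fin m) (R := ℝ) Finset.univ
      (fun i b => Real.exp ((if b then (1:ℝ) else -1) * a i))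
    rw [Fintype.piFinset_univ] at this
    calc ∑ σ : Fin m → Bool, Real.exp (∑ i, (if σ i then (1:ℝ) else -1) * a i)
        = ∑ σ : Fin m → Bool, ∏ i, Real.exp ((if σ i then (1:ℝ) else -1) * a i) := by
          simp [Real.exp_sum]
      _ = ∏ i, ∑ b : Bool, Real.exp ((if b then (1:ℝ) else -1) * a i) := this
      _ = ∏ i, (Real.exp (a i) + Real.exp (-a i)) := by
          refine Finset.prod_congr rfl fun i _ => ?_
          simp [Fintype.sum_bool, neg_mul]
  rw [h1]
  have h2 : (2 ^ m : ℝ)⁻¹ * ∏ i : Fin m, (Real.exp (a i) + Real.exp (-a i))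
      = ∏ i : Fin m, Real.cosh (a i) := by
    rw [Finset.prod_congr rfl (fun i _ => (Real.cosh_eq (a i)).symm ▸
      rfl : ∀ i ∈ Finset.univ, Real.cosh (a i) = (Real.exp (a i) + Real.exp (-a i)) / 2)]
    rw [Finset.prod_div_distrib, Finset.prod_const]
    rw [eq_div_iff (by positivity)]
    ring_nf
    simp [Finset.card_univ]
    rw [mul_comm, ← mul_assoc, mul_inv_cancel₀ (by positivity), one_mul]
  rw [h2]
  calc ∏ i : Fin m, Real.cosh (a i) ≤ ∏ i : Fin m, Real.exp ((a i) ^ 2 / 2) :=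
        Finset.prod_le_prod (fun i _ => (Real.cosh_pos (a i)).le)
          (fun i _ => Real.cosh_le_exp_half_sq (a i))
    _ = Real.exp ((∑ i, (a i) ^ 2) / 2) := by
        rw [← Real.exp_sum, Finset.sum_div]

set_option maxHeartbeats 1000000 in
lemma massartAux {m : ℕ} {ι : Type*} [Fintype ι] (hne : (Finset.univ : Finset ι).Nonempty)
    (a : ι → Fin m → ℝ) (r : ℝ) (hr : 0 ≤ r)
    (ha : ∀ j, ∑ i, (a j i) ^ 2 ≤ r ^ 2)
    (hK : 1 < (Fintype.card ι : ℝ)) :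
    (2 ^ m : ℝ)⁻¹ * ∑ σ : Fin m → Bool,
        Finset.univ.sup' hne (fun j => ∑ i, (if σ i then (1:ℝ) else -1) * a j i)
      ≤ r * Real.sqrt (2 * Real.log (Fintype.card ι)) := by
  set K : ℝ := (Fintype.card ι : ℝ) with hKdef
  have hKpos : 0 < K := by positivity
  have hlogK : 0 < Real.log K := Real.log_pos hK
  rcases hr.eq_or_lt with hre | hrpos
  · -- r = 0 : all a vanish
    have hz : ∀ j i, a j i = 0 := by
      intro j i
      have h0 : ∑ i, (a j i) ^ 2 ≤ 0 := by simpa [← hre] using ha j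
      have hall := (Finset.sum_eq_zero_iff_of_nonneg (fun i _ => sq_nonneg (a j i))).mp
        (le_antisymm h0 (Finset.sum_nonneg fun i _ => sq_nonneg _)) i (Finset.mem_univ i)
      exact pow_eq_zero_iff (two_ne_zero) |>.mp hall
    have hzero : ∀ σ : Fin m → Bool,
        Finset.univ.sup' hne (fun j => ∑ i, (if σ i then (1:ℝ) else -1) * a j i) = 0 := by
      intro σ
      have : (fun j : ι => ∑ i, (if σ i then (1:ℝ) else -1) * a j i)
          = fun _ : ι => (0:ℝ) := by funext j; simp [hz]
      rw [this, Finset.sup'_const]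
    simp only [hzero, Finset.sum_const, smul_zero, mul_zero]
    positivity
  · set s : ℝ := Real.sqrt (2 * Real.log K) with hsdef
    have hspos : 0 < s := Real.sqrt_pos.mpr (by positivity)
    have hs2 : s ^ 2 = 2 * Real.log K := Real.sq_sqrt (by positivity)
    set lam : ℝ := s / r with hlam
    have hlampos : 0 < lam := div_pos hspos hrpos
    set X : ι → (Fin m → Bool) → ℝ :=
      fun j σ => ∑ i, (if σ i then (1:ℝ) else -1) * a j i with hX
    set M : (Fin m → Bool) → ℝ := fun σ => Finset.univ.sup' hne (fun j => X j σ) with hM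
    set E : ℝ := (2 ^ m : ℝ)⁻¹ * ∑ σ : Fin m → Bool, M σ with hE
    have hcard2 : (Fintype.card (Fin m → Bool) : ℝ) = 2 ^ m := by
      simp [Fintype.card_fun]
    have hwsum : ∑ _σ : Fin m → Bool, (2 ^ m : ℝ)⁻¹ = 1 := by
      rw [Finset.sum_const, nsmul_eq_mul, Finset.card_univ, ← hcard2]
      rw [hcard2]
      field_simp
    -- Jensen
    have hjensen : Real.exp (lam * E) ≤
        ∑ σ : Fin m → Bool, (2 ^ m : ℝ)⁻¹ * Real.exp (lam * M σ) := by
      have hsum : lam * E = ∑ σ : Fin m → Bool, (2 ^ m : ℝ)⁻¹ • (lam * M σ) := by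
        rw [hE, Finset.mul_sum, Finset.mul_sum]
        exact Finset.sum_congr rfl fun σ _ => by simp [smul_eq_mul]; ring
      rw [hsum]
      have := convexOn_exp.map_sum_le (t := (Finset.univ : Finset (Fin m → Bool)))
        (w := fun _ => (2 ^ m : ℝ)⁻¹) (p := fun σ => lam * M σ)
        (fun _ _ => by positivity) hwsum (fun _ _ => Set.mem_univ _)
      simpa [smul_eq_mul] using this
    -- per-σ: exp(lam * M σ) ≤ ∑_j exp(lam * X j σ)
    have hmaxle : ∀ σ, Real.exp (lam * M σ) ≤ ∑ j : ι, Real.exp (lam * X j σ) := by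
      intro σ
      obtain ⟨j₀, _, hj₀⟩ := Finset.exists_mem_eq_sup' hne (fun j => X j σ)
      have hMj : M σ = X j₀ σ := hj₀
      rw [hMj]
      exact Finset.single_le_sum (f := fun j : ι => Real.exp (lam * X j σ)) (fun j _ => (Real.exp_pos _).le) (Finset.mem_univ j₀)
    -- mgf bound
    have hmgf : ∀ j : ι, (2 ^ m : ℝ)⁻¹ * ∑ σ : Fin m → Bool, Real.exp (lam * X j σ)
        ≤ Real.exp (lam ^ 2 * r ^ 2 / 2) := by
      intro j
      have h1 : ∀ σ : Fin m → Bool,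
          lam * X j σ = ∑ i, (if σ i then (1:ℝ) else -1) * (lam * a j i) := by
        intro σ
        rw [hX, Finset.mul_sum]
        exact Finset.sum_congr rfl fun i _ => by ring
      calc (2 ^ m : ℝ)⁻¹ * ∑ σ : Fin m → Bool, Real.exp (lam * X j σ)
          = (2 ^ m : ℝ)⁻¹ * ∑ σ : Fin m → Bool,
              Real.exp (∑ i, (if σ i then (1:ℝ) else -1) * (lam * a j i)) := by
            simp only [h1]
        _ ≤ Real.exp ((∑ i, (lam * a j i) ^ 2) / 2) := expSumAux _
        _ ≤ Real.exp (lam ^ 2 * r ^ 2 / 2) := by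
            apply Real.exp_le_exp.mpr
            have : ∑ i, (lam * a j i) ^ 2 = lam ^ 2 * ∑ i, (a j i) ^ 2 := by
              rw [Finset.mul_sum]; exact Finset.sum_congr rfl fun i _ => by ring
            rw [this]
            have := mul_le_mul_of_nonneg_left (ha j) (sq_nonneg lam)
            linarith
    -- combine
    have hexp : Real.exp (lam * E) ≤ K * Real.exp (lam ^ 2 * r ^ 2 / 2) := by
      calc Real.exp (lam * E) ≤ ∑ σ : Fin m → Bool, (2 ^ m : ℝ)⁻¹ * Real.exp (lam * M σ) :=
            hjensen
        _ ≤ ∑ σ : Fin m → Bool, (2 ^ m : ℝ)⁻¹ * ∑ j : ι, Real.exp (lam * X j σ) := by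
            apply Finset.sum_le_sum
            intro σ _
            exact mul_le_mul_of_nonneg_left (hmaxle σ) (by positivity)
        _ = ∑ j : ι, (2 ^ m : ℝ)⁻¹ * ∑ σ : Fin m → Bool, Real.exp (lam * X j σ) := by
            simp only [Finset.mul_sum]
            rw [Finset.sum_comm]
        _ ≤ ∑ j : ι, Real.exp (lam ^ 2 * r ^ 2 / 2) := Finset.sum_le_sum fun j _ => hmgf j
        _ = K * Real.exp (lam ^ 2 * r ^ 2 / 2) := by
            rw [Finset.sum_const, nsmul_eq_mul, Finset.card_univ, hKdef]
    have hlog : lam * E ≤ Real.log K + lam ^ 2 * r ^ 2 / 2 := by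
      have := Real.log_le_log (Real.exp_pos _) hexp
      rwa [Real.log_exp, Real.log_mul hKpos.ne' (Real.exp_pos _).ne', Real.log_exp] at this
    have hEle : E ≤ (Real.log K + lam ^ 2 * r ^ 2 / 2) / lam := by
      rw [le_div_iff₀ hlampos]
      linarith [hlog]
    calc E ≤ (Real.log K + lam ^ 2 * r ^ 2 / 2) / lam := hEle
      _ = r * s := by
          rw [hlam]
          field_simp
          nlinarith [hs2, hspos, hrpos]

noncomputable def empRad {Z Hyp : Type*} (m : ℕ) (H : (Fin m → Z) → Set Hyp)
    (L : Hyp → Z → ℝ) (S T : Fin m → Z) : ℝ :=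
  (m : ℝ)⁻¹ * ((2 ^ m : ℝ)⁻¹ *
    ∑ σ : Fin m → Bool,
      ⨆ h ∈ H (fun i => if σ i then S i else T i),
        ∑ i, (if σ i then (1 : ℝ) else -1) * L h (T i))

set_option maxHeartbeats 1000000 in
/-- Bound on the empirical data-dependent Rademacher complexity of the family of
hypothesis sets `H_S = {x ↦ w·x : w = Σ_i α_i x^S_i, ‖α‖₁ ≤ Λ₁}` of linear predictors,
where points `x ∈ ℝ^N` are encoded as `Fin N → ℝ`, `w·x = Σ_j w_j x_j` and
`‖x‖₂ = √(Σ_j x_j²)`. -/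
theorem stmt9 (N m : ℕ) (hm : 0 < m) (Λ₁ : ℝ) (hΛ : 0 ≤ Λ₁)
    (S T : Fin m → Fin N → ℝ) :
    let H : (Fin m → Fin N → ℝ) → Set ((Fin N → ℝ) → ℝ) := fun W =>
      {f | ∃ α : Fin m → ℝ, (∑ i, |α i|) ≤ Λ₁ ∧
        f = fun x => ∑ j, (∑ i, α i * W i j) * x j}
    let rT : ℝ := Real.sqrt ((∑ i, ∑ j, (T i j) ^ 2) / m)
    let rST : ℝ := ⨆ i : Fin m,
      max (Real.sqrt (∑ j, (S i j) ^ 2)) (Real.sqrt (∑ j, (T i j) ^ 2))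
    empRad m H (fun f x => f x) S T
        ≤ rT * rST * Λ₁ * Real.sqrt (2 * Real.log (4 * m) / m)
    ∧ rT * rST * Λ₁ * Real.sqrt (2 * Real.log (4 * m) / m)
        ≤ rST ^ 2 * Λ₁ * Real.sqrt (2 * Real.log (4 * m) / m) := by
  intro H rT rST
  haveI : Nonempty (Fin m) := ⟨⟨0, hm⟩⟩
  have hmpos : (0:ℝ) < m := by exact_mod_cast hm
  have hm1 : (1:ℝ) ≤ m := by exact_mod_cast hm
  set Q : ℝ := ∑ i, ∑ j, (T i j) ^ 2 with hQdef
  have hQ0 : 0 ≤ Q := by positivity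
  have hbdd : BddAbove (Set.range fun i : Fin m =>
      max (Real.sqrt (∑ j, (S i j) ^ 2)) (Real.sqrt (∑ j, (T i j) ^ 2))) :=
    Set.Finite.bddAbove (Set.finite_range _)
  have hrSTS : ∀ k, Real.sqrt (∑ j, (S k j) ^ 2) ≤ rST := fun k =>
    le_trans (le_max_left _ _) (le_ciSup hbdd k)
  have hrSTT : ∀ k, Real.sqrt (∑ j, (T k j) ^ 2) ≤ rST := fun k =>
    le_trans (le_max_right _ _) (le_ciSup hbdd k)
  have hrST0 : 0 ≤ rST := le_trans (Real.sqrt_nonneg _) (hrSTT ⟨0, hm⟩)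
  have hSsq : ∀ k, (∑ j, (S k j) ^ 2) ≤ rST ^ 2 := by
    intro k
    rw [show (∑ j, (S k j) ^ 2) = (Real.sqrt (∑ j, (S k j) ^ 2)) ^ 2 from
      (Real.sq_sqrt (by positivity)).symm]
    exact pow_le_pow_left₀ (Real.sqrt_nonneg _) (hrSTS k) 2
  have hTsq : ∀ k, (∑ j, (T k j) ^ 2) ≤ rST ^ 2 := by
    intro k
    rw [show (∑ j, (T k j) ^ 2) = (Real.sqrt (∑ j, (T k j) ^ 2)) ^ 2 from
      (Real.sq_sqrt (by positivity)).symm]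
    exact pow_le_pow_left₀ (Real.sqrt_nonneg _) (hrSTT k) 2
  -- the finite family of linear functionals
  set a : Fin m × Bool × Bool → Fin m → ℝ := fun j i =>
    (if j.2.2 then (1:ℝ) else -1) * ∑ l, (if j.2.1 then S j.1 else T j.1) l * T i l
    with hadef
  have hne : (Finset.univ : Finset (Fin m × Bool × Bool)).Nonempty := univ_nonempty
  have hcard : (Fintype.card (Fin m × Bool × Bool) : ℝ) = 4 * m := by
    simp [Fintype.card_prod]; ring
  have hK1 : 1 < (Fintype.card (Fin m × Bool × Bool) : ℝ) := by
    rw [hcard]; nlinarith [hm1]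
  -- Cauchy–Schwarz bound on the rows
  have ha : ∀ j, ∑ i, (a j i) ^ 2 ≤ (rST * Real.sqrt Q) ^ 2 := by
    intro j
    have step : ∀ i, (a j i) ^ 2 ≤ rST ^ 2 * ∑ l, (T i l) ^ 2 := by
      intro i
      have h1 : (a j i) ^ 2 = (∑ l, (if j.2.1 then S j.1 else T j.1) l * T i l) ^ 2 := by
        rw [hadef]
        rcases j with ⟨k, b, s⟩
        cases s <;> simp <;> ring
      rw [h1]
      refine (Finset.sum_mul_sq_le_sq_mul_sq Finset.univ _ _).trans ?_
      apply mul_le_mul_of_nonneg_right _ (by positivity)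
      rcases j with ⟨k, b, s⟩
      cases b
      · simpa using hTsq k
      · simpa using hSsq k
    calc ∑ i, (a j i) ^ 2 ≤ ∑ i, rST ^ 2 * ∑ l, (T i l) ^ 2 :=
          Finset.sum_le_sum fun i _ => step i
      _ = rST ^ 2 * Q := by rw [← Finset.mul_sum]
      _ = (rST * Real.sqrt Q) ^ 2 := by rw [mul_pow, Real.sq_sqrt hQ0]
  have hmassart := massartAux hne a (rST * Real.sqrt Q) (by positivity) ha hK1
  rw [hcard] at hmassart
  -- per-σ bound on the supremum
  have hper : ∀ σ : Fin m → Bool,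
      (⨆ h ∈ H (fun i => if σ i then S i else T i),
        ∑ i, (if σ i then (1:ℝ) else -1) * h (T i))
      ≤ Λ₁ * Finset.univ.sup' hne
          (fun j => ∑ i, (if σ i then (1:ℝ) else -1) * a j i) := by
    intro σ
    set M : ℝ := Finset.univ.sup' hne
      (fun j => ∑ i, (if σ i then (1:ℝ) else -1) * a j i) with hMdef
    have hXneg : ∀ k b, (∑ i, (if σ i then (1:ℝ) else -1) * a (k, b, false) i)
        = -(∑ i, (if σ i then (1:ℝ) else -1) * a (k, b, true) i) := by
      intro k b
      rw [← Finset.sum_neg_distrib]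
      refine Finset.sum_congr rfl fun i _ => ?_
      rw [hadef]
      simp only
      norm_num
    have hM0 : 0 ≤ M := by
      have h1 := Finset.le_sup' (fun j : Fin m × Bool × Bool =>
        ∑ i, (if σ i then (1:ℝ) else -1) * a j i) (Finset.mem_univ (⟨0, hm⟩, true, true))
      have h2 := Finset.le_sup' (fun j : Fin m × Bool × Bool =>
        ∑ i, (if σ i then (1:ℝ) else -1) * a j i) (Finset.mem_univ (⟨0, hm⟩, true, false))
      rw [hXneg] at h2
      rw [← hMdef] at h1 h2
      linarith
    apply Real.iSup_le _ (mul_nonneg hΛ hM0)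
    intro h
    apply Real.iSup_le _ (mul_nonneg hΛ hM0)
    intro hh
    have hh2 : ∃ α : Fin m → ℝ, (∑ i, |α i|) ≤ Λ₁ ∧
        h = fun x => ∑ j, (∑ k, α k * (if σ k then S k else T k) j) * x j := hh
    obtain ⟨α, hα, rfl⟩ := hh2
    set d : Fin m → ℝ := fun k => ∑ i, (if σ i then (1:ℝ) else -1) * a (k, σ k, true) i
      with hddef
    have inner : ∀ i : Fin m, (∑ j, (∑ k, α k * (if σ k then S k else T k) j) * T i j)
        = ∑ k, α k * ∑ j, (if σ k then S k else T k) j * T i j := by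
      intro i
      simp only [Finset.sum_mul]
      rw [Finset.sum_comm]
      exact Finset.sum_congr rfl fun k _ => by
        rw [Finset.mul_sum]
        exact Finset.sum_congr rfl fun j _ => by ring
    have key : (∑ i, (if σ i then (1:ℝ) else -1) *
          ((fun x => ∑ j, (∑ k, α k * (if σ k then S k else T k) j) * x j) (T i)))
        = ∑ k, α k * d k := by
      simp only [inner]
      simp only [Finset.mul_sum]
      rw [Finset.sum_comm]
      refine Finset.sum_congr rfl fun k _ => ?_
      simp only [hddef, hadef, reduceIte, one_mul, Finset.mul_sum]
      refine Finset.sum_congr rfl fun i _ => Finset.sum_congr rfl fun j _ => by ring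
    rw [key]
    have hdM : ∀ k, |d k| ≤ M := by
      intro k
      have h1 := Finset.le_sup' (fun j : Fin m × Bool × Bool =>
        ∑ i, (if σ i then (1:ℝ) else -1) * a j i) (Finset.mem_univ (k, σ k, true))
      have h2 := Finset.le_sup' (fun j : Fin m × Bool × Bool =>
        ∑ i, (if σ i then (1:ℝ) else -1) * a j i) (Finset.mem_univ (k, σ k, false))
      rw [hXneg] at h2
      rw [← hMdef] at h1 h2
      rw [hddef]
      exact abs_le.mpr ⟨by linarith, h1⟩
    calc ∑ k, α k * d k ≤ ∑ k, |α k| * M := by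
          refine Finset.sum_le_sum fun k _ => ?_
          calc α k * d k ≤ |α k * d k| := le_abs_self _
            _ = |α k| * |d k| := abs_mul _ _
            _ ≤ |α k| * M := mul_le_mul_of_nonneg_left (hdM k) (abs_nonneg _)
      _ = (∑ k, |α k|) * M := (Finset.sum_mul _ _ _).symm
      _ ≤ Λ₁ * M := mul_le_mul_of_nonneg_right hα hM0
  -- assemble the first inequality
  have hemp : empRad m H (fun f x => f x) S T = (m:ℝ)⁻¹ * ((2 ^ m : ℝ)⁻¹ *
      ∑ σ : Fin m → Bool, ⨆ h ∈ H (fun i => if σ i then S i else T i),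
        ∑ i, (if σ i then (1:ℝ) else -1) * h (T i)) := rfl
  have hrT : rT = Real.sqrt Q / Real.sqrt m := by
    rw [show rT = Real.sqrt (Q / m) from rfl, Real.sqrt_div hQ0]
  have hlog0 : (0:ℝ) ≤ 2 * Real.log (4 * m) := by
    have : (1:ℝ) ≤ 4 * m := by linarith
    have := Real.log_nonneg this
    linarith
  have hlogdiv : Real.sqrt (2 * Real.log (4 * m) / m)
      = Real.sqrt (2 * Real.log (4 * m)) / Real.sqrt m := Real.sqrt_div hlog0 m
  have hsqm : (0:ℝ) < Real.sqrt m := Real.sqrt_pos.mpr hmpos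
  have hsm : Real.sqrt (m:ℝ) * Real.sqrt (m:ℝ) = (m:ℝ) := Real.mul_self_sqrt hmpos.le
  constructor
  · calc empRad m H (fun f x => f x) S T
        = (m:ℝ)⁻¹ * ((2 ^ m : ℝ)⁻¹ *
          ∑ σ : Fin m → Bool, ⨆ h ∈ H (fun i => if σ i then S i else T i),
            ∑ i, (if σ i then (1:ℝ) else -1) * h (T i)) := hemp
      _ ≤ (m:ℝ)⁻¹ * ((2 ^ m : ℝ)⁻¹ * ∑ σ : Fin m → Bool,
            Λ₁ * Finset.univ.sup' hne
              (fun j => ∑ i, (if σ i then (1:ℝ) else -1) * a j i)) := by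
          apply mul_le_mul_of_nonneg_left _ (by positivity)
          apply mul_le_mul_of_nonneg_left _ (by positivity)
          exact Finset.sum_le_sum fun σ _ => hper σ
      _ = Λ₁ * ((2 ^ m : ℝ)⁻¹ * ∑ σ : Fin m → Bool,
            Finset.univ.sup' hne
              (fun j => ∑ i, (if σ i then (1:ℝ) else -1) * a j i)) * (m:ℝ)⁻¹ := by
          rw [← Finset.mul_sum]; ring
      _ ≤ Λ₁ * ((rST * Real.sqrt Q) * Real.sqrt (2 * Real.log (4 * m))) * (m:ℝ)⁻¹ := by
          apply mul_le_mul_of_nonneg_right _ (by positivity)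
          exact mul_le_mul_of_nonneg_left hmassart hΛ
      _ = rT * rST * Λ₁ * Real.sqrt (2 * Real.log (4 * m) / m) := by
          rw [hrT, hlogdiv]
          field_simp
          ring_nf
          rw [Real.sq_sqrt hmpos.le]; ring
  · have hrTrST : rT ≤ rST := by
      have hQle : Q ≤ (m:ℝ) * rST ^ 2 := by
        calc Q = ∑ i : Fin m, ∑ j, (T i j) ^ 2 := hQdef
          _ ≤ ∑ _i : Fin m, rST ^ 2 := Finset.sum_le_sum fun i _ => hTsq i
          _ = m * rST ^ 2 := by
            rw [Finset.sum_const, nsmul_eq_mul, Finset.card_univ, Fintype.card_fin]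
      have hdivle : Q / m ≤ rST ^ 2 := by rw [div_le_iff₀ hmpos]; nlinarith
      calc rT = Real.sqrt (Q / m) := rfl
        _ ≤ Real.sqrt (rST ^ 2) := Real.sqrt_le_sqrt hdivle
        _ = rST := Real.sqrt_sq hrST0
    calc rT * rST * Λ₁ * Real.sqrt (2 * Real.log (4 * m) / m)
        ≤ rST * rST * Λ₁ * Real.sqrt (2 * Real.log (4 * m) / m) :=
          mul_le_mul_of_nonneg_right (mul_le_mul_of_nonneg_right
            (mul_le_mul_of_nonneg_right hrTrST hrST0) hΛ) (Real.sqrt_nonneg _)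
      _ = rST ^ 2 * Λ₁ * Real.sqrt (2 * Real.log (4 * m) / m) := by ring
end

section
/- Suppose that to every sample S ∈ Z^m one associates a matrix A_S ∈ ℝ^{d×N}, and for Λ > 0 let W_{S,Λ} = { w ∈ ℝ^d : ‖A_Sᵀ w‖₂ ≤ Λ } and H_S = { x ↦ wᵀ A_S x : w ∈ W_{S,Λ} }, where inputs x lie in ℝ^N. Then for any samples S, T, the empirical data-dependent Rademacher complexity satisfies ℜ̂°_{S,T}(H) ≤ Λ·√(Σ_{i=1}^m ‖x^T_i‖₂²)/m ≤ Λ·r/√m, where r = max_{i∈[m]} ‖x^T_i‖₂ and x^T_1,...,x^T_m are the input points of T. -/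
open MeasureTheory Finset

private def eps {m : ℕ} (σ : Fin m → Bool) (i : Fin m) : ℝ := if σ i then 1 else -1

private lemma eps_sq {m : ℕ} (σ : Fin m → Bool) (i : Fin m) : eps σ i * eps σ i = 1 := by
  unfold eps; split <;> norm_num

private lemma sign_cross {m : ℕ} {i k : Fin m} (hik : i ≠ k) :
    ∑ σ : Fin m → Bool, eps σ i * eps σ k = 0 := by
  refine Finset.sum_involution (fun σ _ => Function.update σ i (!σ i)) ?_ ?_ ?_ ?_
  · intro σ _
    have h1 : eps (Function.update σ i (!σ i)) i = - eps σ i := by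
      unfold eps; simp only [Function.update_self]; cases σ i <;> norm_num
    have h2 : eps (Function.update σ i (!σ i)) k = eps σ k := by
      unfold eps; rw [Function.update_of_ne (Ne.symm hik)]
    rw [h1, h2]; ring
  · intro σ _ _ h
    have := congrFun h i
    simp [Function.update_self] at this
  · intro σ _; exact Finset.mem_univ _
  · intro σ _
    funext j
    by_cases hj : j = i
    · subst hj; simp
    · simp [Function.update_of_ne hj]

private lemma sum_sq_signs {m : ℕ} (a : Fin m → ℝ) :
    ∑ σ : Fin m → Bool, (∑ i, eps σ i * a i) ^ 2 = 2 ^ m * ∑ i, a i ^ 2 := by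
  have expand : ∀ σ : Fin m → Bool, (∑ i, eps σ i * a i) ^ 2
      = ∑ i, ∑ k, (eps σ i * eps σ k) * (a i * a k) := by
    intro σ
    rw [sq, Finset.sum_mul_sum]
    exact Finset.sum_congr rfl fun i _ => Finset.sum_congr rfl fun k _ => by ring
  simp only [expand]
  rw [Finset.sum_comm]
  have key : ∀ i : Fin m, ∑ σ : Fin m → Bool, ∑ k, (eps σ i * eps σ k) * (a i * a k)
      = 2 ^ m * a i ^ 2 := by
    intro i
    rw [Finset.sum_comm]
    rw [Finset.sum_eq_single i]
    · simp only [eps_sq, one_mul]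
      rw [Finset.sum_const]
      simp [sq, Fintype.card_fun]
    · intro k _ hk
      rw [← Finset.sum_mul, sign_cross (Ne.symm hk), zero_mul]
    · simp
  rw [Finset.sum_congr rfl fun i _ => key i, Finset.mul_sum]

private lemma dot_le {n : ℕ} (u v : Fin n → ℝ) :
    ∑ j, u j * v j ≤ Real.sqrt (∑ j, u j ^ 2) * Real.sqrt (∑ j, v j ^ 2) := by
  have h := Finset.sum_mul_sq_le_sq_mul_sq Finset.univ u v
  have h1 : (0:ℝ) ≤ ∑ j, u j ^ 2 := Finset.sum_nonneg fun j _ => sq_nonneg _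
  calc ∑ j, u j * v j ≤ |∑ j, u j * v j| := le_abs_self _
    _ = Real.sqrt ((∑ j, u j * v j) ^ 2) := (Real.sqrt_sq_eq_abs _).symm
    _ ≤ Real.sqrt ((∑ j, u j ^ 2) * ∑ j, v j ^ 2) := Real.sqrt_le_sqrt h
    _ = _ := Real.sqrt_mul h1 _

private lemma dot_rearrange {d N m : ℕ} (B : Matrix (Fin d) (Fin N) ℝ)
    (w : Fin d → ℝ) (c : Fin m → ℝ) (T : Fin m → Fin N → ℝ) :
    ∑ i, c i * dotProduct w (B.mulVec (T i))
      = ∑ j, (B.transpose.mulVec w j) * (∑ i, c i * T i j) := by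
  simp only [Matrix.mulVec, dotProduct, Matrix.transpose_apply,
    Finset.mul_sum, Finset.sum_mul]
  conv_rhs => rw [Finset.sum_comm]
  refine Finset.sum_congr rfl fun i _ => ?_
  rw [Finset.sum_comm]
  refine Finset.sum_congr rfl fun j _ => ?_
  refine Finset.sum_congr rfl fun k _ => ?_
  ring


/-- Bound on the empirical data-dependent Rademacher complexity of the family of
hypothesis sets `H_S = {x ↦ wᵀ A_S x : ‖A_Sᵀ w‖₂ ≤ Λ}`, where points `x ∈ ℝ^N` are
encoded as `Fin N → ℝ` and `‖v‖₂ = √(Σ_j v_j²)`. -/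
theorem stmt10 (N d m : ℕ) (hm : 0 < m) (Λ : ℝ) (hΛ : 0 < Λ)
    (A : (Fin m → Fin N → ℝ) → Matrix (Fin d) (Fin N) ℝ)
    (S T : Fin m → Fin N → ℝ) :
    let H : (Fin m → Fin N → ℝ) → Set ((Fin N → ℝ) → ℝ) := fun W =>
      {f | ∃ w : Fin d → ℝ,
        Real.sqrt (∑ j, (Matrix.mulVec (Matrix.transpose (A W)) w j) ^ 2) ≤ Λ ∧
        f = fun x => dotProduct w (Matrix.mulVec (A W) x)}
    let r : ℝ := ⨆ i : Fin m, Real.sqrt (∑ j, (T i j) ^ 2)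
    empRad m H (fun f x => f x) S T
        ≤ Λ * Real.sqrt (∑ i, ∑ j, (T i j) ^ 2) / m
    ∧ Λ * Real.sqrt (∑ i, ∑ j, (T i j) ^ 2) / m ≤ Λ * r / Real.sqrt m := by
  intro H r
  have hT2 : (0:ℝ) ≤ ∑ i, ∑ j, (T i j) ^ 2 :=
    Finset.sum_nonneg fun i _ => Finset.sum_nonneg fun j _ => sq_nonneg _
  set nv : (Fin m → Bool) → ℝ :=
    fun σ => Real.sqrt (∑ j, (∑ i, eps σ i * T i j) ^ 2) with hnv
  constructor
  · -- first inequality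
    have step1 : ∀ σ : Fin m → Bool,
        (⨆ h ∈ H (fun i => if σ i then S i else T i),
          ∑ i, (if σ i then (1:ℝ) else -1) * h (T i)) ≤ Λ * nv σ := by
      intro σ
      have hΛnv : 0 ≤ Λ * nv σ := mul_nonneg hΛ.le (Real.sqrt_nonneg _)
      apply Real.iSup_le _ hΛnv
      intro h
      apply Real.iSup_le _ hΛnv
      intro hh
      obtain ⟨w, hw, rfl⟩ := hh
      set W := fun i => if σ i then S i else T i
      have hre : ∑ i, (if σ i then (1:ℝ) else -1) * dotProduct w ((A W).mulVec (T i))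
          = ∑ j, ((A W).transpose.mulVec w j) * (∑ i, eps σ i * T i j) := by
        simpa [eps] using dot_rearrange (A W) w (eps σ) T
      rw [hre]
      calc ∑ j, ((A W).transpose.mulVec w j) * (∑ i, eps σ i * T i j)
          ≤ Real.sqrt (∑ j, ((A W).transpose.mulVec w j) ^ 2) * nv σ := dot_le _ _
        _ ≤ Λ * nv σ := mul_le_mul_of_nonneg_right hw (Real.sqrt_nonneg _)
    have sum_nv : ∑ σ : Fin m → Bool, nv σ ≤ 2 ^ m * Real.sqrt (∑ i, ∑ j, (T i j) ^ 2) := by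
      have hsq : (∑ σ : Fin m → Bool, nv σ) ^ 2
          ≤ (2 ^ m : ℝ) * ∑ σ : Fin m → Bool, nv σ ^ 2 := by
        have := Finset.sum_mul_sq_le_sq_mul_sq Finset.univ (fun _ : Fin m → Bool => (1:ℝ)) nv
        simpa [Fintype.card_fun] using this
      have hnvsq : ∑ σ : Fin m → Bool, nv σ ^ 2 = 2 ^ m * ∑ i, ∑ j, (T i j) ^ 2 := by
        have h0 : ∀ σ : Fin m → Bool, nv σ ^ 2 = ∑ j, (∑ i, eps σ i * T i j) ^ 2 := fun σ =>
          Real.sq_sqrt (Finset.sum_nonneg fun j _ => sq_nonneg _)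
        rw [Finset.sum_congr rfl fun σ _ => h0 σ, Finset.sum_comm]
        rw [Finset.sum_congr rfl fun j _ => sum_sq_signs (fun i => T i j)]
        rw [← Finset.mul_sum, Finset.sum_comm]
      have hL : 0 ≤ ∑ σ : Fin m → Bool, nv σ :=
        Finset.sum_nonneg fun σ _ => Real.sqrt_nonneg _
      have hRsq : ((2:ℝ) ^ m * Real.sqrt (∑ i, ∑ j, (T i j) ^ 2)) ^ 2
          = (2:ℝ) ^ m * ((2:ℝ) ^ m * (∑ i, ∑ j, (T i j) ^ 2)) := by
        rw [mul_pow, Real.sq_sqrt hT2]; ring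
      calc ∑ σ : Fin m → Bool, nv σ
          = Real.sqrt ((∑ σ : Fin m → Bool, nv σ) ^ 2) := (Real.sqrt_sq hL).symm
        _ ≤ Real.sqrt (((2:ℝ) ^ m * Real.sqrt (∑ i, ∑ j, (T i j) ^ 2)) ^ 2) := by
            apply Real.sqrt_le_sqrt
            rw [hRsq]
            rw [hnvsq] at hsq
            exact hsq
        _ = 2 ^ m * Real.sqrt (∑ i, ∑ j, (T i j) ^ 2) := Real.sqrt_sq (by positivity)
    unfold empRad
    have hmpos : (0:ℝ) < m := by exact_mod_cast hm
    have hsum : ∑ σ : Fin m → Bool,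
        (⨆ h ∈ H (fun i => if σ i then S i else T i),
          ∑ i, (if σ i then (1:ℝ) else -1) * h (T i))
        ≤ Λ * ∑ σ : Fin m → Bool, nv σ := by
      rw [Finset.mul_sum]
      exact Finset.sum_le_sum fun σ _ => step1 σ
    have hmain : (m : ℝ)⁻¹ * ((2 ^ m : ℝ)⁻¹ * ∑ σ : Fin m → Bool,
        (⨆ h ∈ H (fun i => if σ i then S i else T i),
          ∑ i, (if σ i then (1:ℝ) else -1) * h (T i)))
        ≤ (m : ℝ)⁻¹ * ((2 ^ m : ℝ)⁻¹ * (Λ * (2 ^ m * Real.sqrt (∑ i, ∑ j, (T i j) ^ 2)))) := by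
      gcongr
      exact hsum.trans (mul_le_mul_of_nonneg_left sum_nv hΛ.le)
    refine hmain.trans (le_of_eq ?_)
    field_simp
  · -- second inequality
    have hmpos : (0:ℝ) < m := by exact_mod_cast hm
    have hbdd : BddAbove (Set.range fun i : Fin m => Real.sqrt (∑ j, (T i j) ^ 2)) :=
      Set.Finite.bddAbove (Set.finite_range _)
    have hr : ∀ i : Fin m, Real.sqrt (∑ j, (T i j) ^ 2) ≤ r := fun i => le_ciSup hbdd i
    have hr0 : 0 ≤ r := le_trans (Real.sqrt_nonneg _) (hr ⟨0, hm⟩)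
    have key : ∑ i, ∑ j, (T i j) ^ 2 ≤ m * r ^ 2 := by
      have hstep : ∀ i : Fin m, ∑ j, (T i j) ^ 2 ≤ r ^ 2 := by
        intro i
        have h1 : (0:ℝ) ≤ ∑ j, (T i j) ^ 2 := Finset.sum_nonneg fun j _ => sq_nonneg _
        nlinarith [hr i, Real.sq_sqrt h1, Real.sqrt_nonneg (∑ j, (T i j) ^ 2)]
      calc ∑ i, ∑ j, (T i j) ^ 2 ≤ ∑ _i : Fin m, r ^ 2 := Finset.sum_le_sum fun i _ => hstep i
        _ = m * r ^ 2 := by simp [Finset.sum_const, mul_comm]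
    have hsqrt : Real.sqrt (∑ i, ∑ j, (T i j) ^ 2) ≤ Real.sqrt m * r := by
      calc Real.sqrt (∑ i, ∑ j, (T i j) ^ 2) ≤ Real.sqrt (m * r ^ 2) := Real.sqrt_le_sqrt key
        _ = Real.sqrt m * r := by
            rw [Real.sqrt_mul (by positivity), Real.sqrt_sq hr0]
    have hsm : (0:ℝ) < Real.sqrt m := Real.sqrt_pos.mpr hmpos
    rw [div_le_div_iff₀ hmpos hsm]
    have hmm : Real.sqrt m * Real.sqrt m = m := Real.mul_self_sqrt hmpos.le
    calc Λ * Real.sqrt (∑ i, ∑ j, (T i j) ^ 2) * Real.sqrt m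
        ≤ Λ * (Real.sqrt m * r) * Real.sqrt m := by gcongr
      _ = Λ * r * (Real.sqrt m * Real.sqrt m) := by ring
      _ = Λ * r * m := by rw [hmm]
end

section
/- Suppose the family of data-dependent hypothesis sets (H_S)_{S∈Z^m} is β-uniformly stable and has max-diameter Δ_max, and let S ↦ h_S be any map selecting a hypothesis h_S ∈ H_S for every sample S. Then for any two samples S, S' ∈ Z^m differing in exactly one point and for every z ∈ Z, |L(h_S, z) − L(h_{S'}, z)| ≤ 3β + Δ_max; i.e., the selector is uniformly stable with parameter 3β + Δ_max in the classical sense. -/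
open Finset

/-- Any selector `S ↦ h_S ∈ H_S` from a `β`-uniformly stable family of data-dependent
hypothesis sets with max-diameter `Δ_max` is uniformly stable in the classical sense
with parameter `3β + Δ_max`. -/
theorem stmt14 {Z Hyp : Type*}
    (m : ℕ) (hm : 0 < m) (H : (Fin m → Z) → Set Hyp) (L : Hyp → Z → ℝ)
    (hL : ∀ h z, L h z ∈ Set.Icc (0 : ℝ) 1)
    (hne : ∀ S : Fin m → Z, (H S).Nonempty)
    (β : ℝ) (hβ : 0 ≤ β)
    (hstable : ∀ S S' : Fin m → Z, (∃ j, ∀ i, i ≠ j → S i = S' i) →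
      ∀ h ∈ H S, ∃ h' ∈ H S', ∀ z, |L h z - L h' z| ≤ β)
    (Δmax : ℝ)
    (hdiam : ∀ S : Fin m → Z, ∀ j : Fin m,
      (⨆ h' ∈ H S, ⨆ h ∈ H S, (L h' (S j) - L h (S j))) ≤ Δmax)
    (sel : (Fin m → Z) → Hyp) (hsel : ∀ S, sel S ∈ H S)
    (S S' : Fin m → Z) (hadj : ∃ j, ∀ i, i ≠ j → S i = S' i) (z : Z) :
    |L (sel S) z - L (sel S') z| ≤ 3 * β + Δmax := by
  obtain ⟨j, hj⟩ := hadj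
  set T : Fin m → Z := Function.update S j z with hT
  have hTj : T j = z := Function.update_self j z S
  have hST : ∃ k, ∀ i, i ≠ k → S i = T i :=
    ⟨j, fun i hi => (Function.update_of_ne hi z S).symm⟩
  have hS'T : ∃ k, ∀ i, i ≠ k → S' i = T i :=
    ⟨j, fun i hi => (hj i hi).symm.trans (Function.update_of_ne hi z S).symm⟩
  obtain ⟨g, hg, hgβ⟩ := hstable S T hST (sel S) (hsel S)
  obtain ⟨g', hg', hg'β⟩ := hstable S' T hS'T (sel S') (hsel S')
  -- key: for any a b ∈ H T, L a (T j) - L b (T j) ≤ Δmax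
  have key : ∀ a ∈ H T, ∀ b ∈ H T, L a (T j) - L b (T j) ≤ Δmax := by
    intro a ha b hb
    refine le_trans ?_ (hdiam T j)
    have hbdd1 : ∀ h' : Hyp, (⨆ h ∈ H T, (L h' (T j) - L h (T j))) ≤ 1 := by
      intro h'
      refine Real.iSup_le (fun h => Real.iSup_le (fun _ => ?_) (by norm_num)) (by norm_num)
      have h1 := hL h' (T j); have h2 := hL h (T j)
      simp only [Set.mem_Icc] at h1 h2
      linarith
    have step1 : L a (T j) - L b (T j) ≤ ⨆ h ∈ H T, (L a (T j) - L h (T j)) := by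
      have hbdd : BddAbove (Set.range fun h : Hyp => ⨆ _ : h ∈ H T, (L a (T j) - L h (T j))) := by
        refine ⟨1, ?_⟩
        rintro x ⟨h, rfl⟩
        refine Real.iSup_le (fun _ => ?_) (by norm_num)
        have h1 := hL a (T j); have h2 := hL h (T j)
        simp only [Set.mem_Icc] at h1 h2
        linarith
      refine le_trans ?_ (le_ciSup hbdd b)
      exact le_ciSup (f := fun _ : b ∈ H T => L a (T j) - L b (T j)) (Set.finite_range _).bddAbove hb
    refine step1.trans ?_
    have hbdd : BddAbove (Set.range fun h' : Hyp =>
        ⨆ _ : h' ∈ H T, ⨆ h ∈ H T, (L h' (T j) - L h (T j))) := by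
      refine ⟨1, ?_⟩
      rintro x ⟨h', rfl⟩
      exact Real.iSup_le (fun _ => hbdd1 h') (by norm_num)
    refine le_trans ?_ (le_ciSup hbdd a)
    exact le_ciSup (f := fun _ : a ∈ H T => ⨆ h ∈ H T, (L a (T j) - L h (T j)))
      (Set.finite_range _).bddAbove ha
  have k1 : L g (T j) - L g' (T j) ≤ Δmax := key g hg g' hg'
  have k2 : L g' (T j) - L g (T j) ≤ Δmax := key g' hg' g hg
  have b1 := abs_le.mp (hgβ z)
  have b2 := abs_le.mp (hg'β z)
  rw [hTj] at k1 k2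
  rw [abs_le]
  constructor <;> [nlinarith; nlinarith]
end

section
/- Suppose for each sample S ∈ Z^m a feature mapping Φ_S : X → ℝ^N is learned, and these mappings are Δ-sensitive: for any two samples S, S' differing in exactly one point and every x ∈ X, ‖Φ_S(x) − Φ_{S'}(x)‖ ≤ Δ. Let 𝓛 be a set of γ-Lipschitz functions f : ℝ^N → ℝ, define H_S = { x ↦ f(Φ_S(x)) : f ∈ 𝓛 }, and suppose the loss ℓ is μ-Lipschitz in its first argument. Then the family (H_S)_{S∈Z^m} is β-uniformly stable with β = μ·γ·Δ. -/
open Finset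
open scoped NNReal

/-- Stable representation learning: if the learned feature mappings `Φ_S : X → ℝ^N` are
`Δ`-sensitive, the functions in `𝓛` are `γ`-Lipschitz, and the loss `ℓ` is `μ`-Lipschitz
in its first argument, then the family of hypothesis sets
`H_S = {x ↦ f (Φ_S x) : f ∈ 𝓛}` is `μγΔ`-uniformly stable. -/
theorem stmt17 {X Y : Type*} (N m : ℕ) (μ γ : ℝ≥0)
    (Φ : (Fin m → X × Y) → X → EuclideanSpace ℝ (Fin N))
    (Δ : ℝ) (hΔ : 0 ≤ Δ)
    (hsens : ∀ S S' : Fin m → X × Y, (∃ j, ∀ i, i ≠ j → S i = S' i) →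
      ∀ x : X, ‖Φ S x - Φ S' x‖ ≤ Δ)
    (𝓛 : Set (EuclideanSpace ℝ (Fin N) → ℝ))
    (hLip : ∀ f ∈ 𝓛, LipschitzWith γ f)
    (ℓ : ℝ → Y → ℝ) (hℓ : ∀ h z, ℓ h z ∈ Set.Icc (0 : ℝ) 1)
    (hℓLip : ∀ y : Y, LipschitzWith μ fun t => ℓ t y) :
    ∀ S S' : Fin m → X × Y, (∃ j, ∀ i, i ≠ j → S i = S' i) →
      ∀ h ∈ {g : X → ℝ | ∃ f ∈ 𝓛, g = fun x => f (Φ S x)},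
        ∃ h' ∈ {g : X → ℝ | ∃ f ∈ 𝓛, g = fun x => f (Φ S' x)},
          ∀ z : X × Y, |ℓ (h z.1) z.2 - ℓ (h' z.1) z.2| ≤ (μ : ℝ) * (γ : ℝ) * Δ := by
  intro S S' hSS' h hh
  obtain ⟨f, hf, rfl⟩ := hh
  refine ⟨fun x => f (Φ S' x), ⟨f, hf, rfl⟩, fun z => ?_⟩
  have h1 : |ℓ (f (Φ S z.1)) z.2 - ℓ (f (Φ S' z.1)) z.2| ≤ μ * |f (Φ S z.1) - f (Φ S' z.1)| := by
    have := (hℓLip z.2).dist_le_mul (f (Φ S z.1)) (f (Φ S' z.1))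
    simpa [Real.dist_eq] using this
  have h2 : |f (Φ S z.1) - f (Φ S' z.1)| ≤ γ * ‖Φ S z.1 - Φ S' z.1‖ := by
    have := (hLip f hf).dist_le_mul (Φ S z.1) (Φ S' z.1)
    simpa [Real.dist_eq, dist_eq_norm] using this
  calc |ℓ (f (Φ S z.1)) z.2 - ℓ (f (Φ S' z.1)) z.2|
      ≤ μ * |f (Φ S z.1) - f (Φ S' z.1)| := h1
    _ ≤ μ * (γ * ‖Φ S z.1 - Φ S' z.1‖) := by
        exact mul_le_mul_of_nonneg_left h2 μ.coe_nonneg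
    _ ≤ μ * (γ * Δ) := by
        gcongr
        exact hsens S S' hSS' z.1
    _ = (μ : ℝ) * γ * Δ := by ring
end

section
/- Suppose for each sample S ∈ Z^m a predictor f*_S : X → ℝ is learned by a β-sensitive algorithm, i.e., ‖f*_S − f*_{S'}‖_∞ ≤ β whenever S and S' differ in exactly one point. Let H be a linear subspace of functions X → ℝ such that f*_{S'} − f*_S ∈ H for all such pairs S, S', define the distillation hypothesis sets H_S = { h ∈ H : ‖h − f*_S‖_∞ ≤ γ } for a fixed γ > 0, and suppose the loss ℓ is μ-Lipschitz in its first argument. Then the family (H_S)_{S∈Z^m} is (μ·β)-uniformly stable. -/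
open Finset
open scoped NNReal

/-- Distillation: if the first-stage predictors `f*_S` are `β`-sensitive in sup norm
(encoded pointwise), `H` is a linear subspace of functions containing all differences
`f*_{S'} - f*_S` for adjacent samples, `H_S = {h ∈ H : ‖h - f*_S‖_∞ ≤ γ}` (sup norm
encoded pointwise), and the loss `ℓ` is `μ`-Lipschitz in its first argument, then the
family `(H_S)` is `μβ`-uniformly stable. -/
theorem stmt18 {X Y : Type*} (m : ℕ) (μ : ℝ≥0) (β γ : ℝ) (hβ : 0 ≤ β) (hγ : 0 < γ)
    (fStar : (Fin m → X × Y) → X → ℝ)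
    (hsens : ∀ S S' : Fin m → X × Y, (∃ j, ∀ i, i ≠ j → S i = S' i) →
      ∀ x : X, |fStar S x - fStar S' x| ≤ β)
    (H : Submodule ℝ (X → ℝ))
    (hdiff : ∀ S S' : Fin m → X × Y, (∃ j, ∀ i, i ≠ j → S i = S' i) →
      (fStar S' - fStar S) ∈ H)
    (ℓ : ℝ → Y → ℝ) (hℓ : ∀ h z, ℓ h z ∈ Set.Icc (0 : ℝ) 1)
    (hℓLip : ∀ y : Y, LipschitzWith μ fun t => ℓ t y) :
    ∀ S S' : Fin m → X × Y, (∃ j, ∀ i, i ≠ j → S i = S' i) →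
      ∀ h ∈ {g : X → ℝ | g ∈ H ∧ ∀ x, |g x - fStar S x| ≤ γ},
        ∃ h' ∈ {g : X → ℝ | g ∈ H ∧ ∀ x, |g x - fStar S' x| ≤ γ},
          ∀ z : X × Y, |ℓ (h z.1) z.2 - ℓ (h' z.1) z.2| ≤ (μ : ℝ) * β := by
  intro S S' hadj h hh
  obtain ⟨hhH, hhγ⟩ := hh
  refine ⟨h + (fStar S' - fStar S), ⟨H.add_mem hhH (hdiff S S' hadj), ?_⟩, ?_⟩
  · intro x
    have he : h x + (fStar S' x - fStar S x) - fStar S' x = h x - fStar S x := by ring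
    simpa [Pi.add_apply, Pi.sub_apply, he] using hhγ x
  · intro z
    have hl := (hℓLip z.2).dist_le_mul (h z.1) ((h + (fStar S' - fStar S)) z.1)
    rw [Real.dist_eq] at hl
    refine le_trans hl ?_
    have he : h z.1 - (h + (fStar S' - fStar S)) z.1 = fStar S z.1 - fStar S' z.1 := by
      simp only [Pi.add_apply, Pi.sub_apply]; ring
    rw [Real.dist_eq, he]
    exact mul_le_mul_of_nonneg_left (hsens S S' hadj z.1) μ.coe_nonneg
end

section
/- Let A be a learning algorithm mapping samples of size p to real-valued predictors that is β_A-uniformly stable in its output: for any two samples B, B' of size p differing in exactly one point and every x, |A(B)(x) − A(B')(x)| ≤ β_A. Fix k index lists I_1,...,I_k, each of p indices from [m], and suppose a given index j ∈ [m] appears in at most t of the lists. Let S, S' ∈ Z^m be two samples that differ only at index j, let B_i and B'_i denote the subsamples of S and S' induced by I_i, let w ∈ ℝ^k be a vector of nonnegative mixing weights summing to 1 with w_i ≤ C/k for all i, and suppose the loss ℓ is μ-Lipschitz in the prediction. Then for every z ∈ Z, | L(Σ_{i=1}^k w_i·A(B_i), z) − L(Σ_{i=1}^k w_i·A(B'_i),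 z) | ≤ (t/k)·C·μ·β_A. -/
open Finset
open scoped NNReal

/-- Hypothesis set stability of bagging: if the base algorithm `A` is `β_A`-uniformly
stable in its output, the index lists `I_1, …, I_k` (each of `p` distinct indices from
`[m]`, i.e. subsamples drawn without replacement) contain a given index `j` in at most
`t` lists, the mixing weights `w` lie in the simplex with `w_i ≤ C/k`, and the loss `ℓ`
is `μ`-Lipschitz in the prediction, then for samples `S, S'` differing only at index `j`,
the losses of the aggregated predictors differ by at most `(t/k) C μ β_A` at any point. -/
theorem stmt19 {X Y : Type*} (m p k : ℕ) (hk : 0 < k) (μ : ℝ≥0) (βA C : ℝ)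
    (hβA : 0 ≤ βA) (hC : 1 ≤ C)
    (A : (Fin p → X × Y) → X → ℝ)
    (hstab : ∀ B B' : Fin p → X × Y, (∃ a, ∀ b, b ≠ a → B b = B' b) →
      ∀ x : X, |A B x - A B' x| ≤ βA)
    (I : Fin k → Fin p → Fin m) (hinj : ∀ i, Function.Injective (I i))
    (j : Fin m) (t : ℕ)
    (ht : (Finset.univ.filter fun i : Fin k => ∃ a, I i a = j).card ≤ t)
    (S S' : Fin m → X × Y) (hdiff : ∀ i, i ≠ j → S i = S' i)
    (w : Fin k → ℝ) (hw0 : ∀ i, 0 ≤ w i) (hw1 : ∑ i, w i = 1)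
    (hwC : ∀ i, w i ≤ C / k)
    (ℓ : ℝ → Y → ℝ) (hℓ : ∀ s z, ℓ s z ∈ Set.Icc (0 : ℝ) 1)
    (hℓLip : ∀ y : Y, LipschitzWith μ fun s => ℓ s y)
    (z : X × Y) :
    |ℓ (∑ i, w i * A (fun a => S (I i a)) z.1) z.2
        - ℓ (∑ i, w i * A (fun a => S' (I i a)) z.1) z.2|
      ≤ ((t : ℝ) / k) * C * (μ : ℝ) * βA := by
  set u := ∑ i, w i * A (fun a => S (I i a)) z.1 with hu
  set v := ∑ i, w i * A (fun a => S' (I i a)) z.1 with hv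
  have hlip : |ℓ u z.2 - ℓ v z.2| ≤ (μ : ℝ) * |u - v| := by
    have := (hℓLip z.2).dist_le_mul u v
    simpa [Real.dist_eq] using this
  set F := Finset.univ.filter fun i : Fin k => ∃ a, I i a = j with hF
  have huv : |u - v| ≤ ((t : ℝ) / k) * C * βA := by
    have hsub : u - v = ∑ i, w i * (A (fun a => S (I i a)) z.1
        - A (fun a => S' (I i a)) z.1) := by
      rw [hu, hv, ← Finset.sum_sub_distrib]
      exact Finset.sum_congr rfl fun i _ => by ring
    rw [hsub]
    have h1 : |∑ i, w i * (A (fun a => S (I i a)) z.1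
        - A (fun a => S' (I i a)) z.1)| ≤ ∑ i ∈ F, C / k * βA := by
      have hzero : ∀ i ∈ (Finset.univ : Finset (Fin k)), i ∉ F →
          w i * (A (fun a => S (I i a)) z.1 - A (fun a => S' (I i a)) z.1) = 0 := by
        intro i _ hiF
        have : ¬ ∃ a, I i a = j := by simpa [hF] using hiF
        have heq : (fun a => S (I i a)) = fun a => S' (I i a) := by
          funext a
          exact hdiff _ (fun h => this ⟨a, h⟩)
        rw [heq]; ring
      rw [← Finset.sum_subset (Finset.subset_univ F) (by
        intro i hi hiF; exact hzero i hi hiF)]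
      refine (Finset.abs_sum_le_sum_abs _ _).trans (Finset.sum_le_sum ?_)
      intro i hiF
      obtain ⟨a, ha⟩ : ∃ a, I i a = j := by simpa [hF] using hiF
      have hA : |A (fun b => S (I i b)) z.1 - A (fun b => S' (I i b)) z.1| ≤ βA := by
        apply hstab _ _ ⟨a, ?_⟩
        intro b hb
        have : I i b ≠ j := fun h => hb (hinj i (h.trans ha.symm))
        exact hdiff _ this
      rw [abs_mul, abs_of_nonneg (hw0 i)]
      exact mul_le_mul (hwC i) hA (abs_nonneg _)
        (div_nonneg (by linarith) (Nat.cast_nonneg k))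
    refine h1.trans ?_
    rw [Finset.sum_const, nsmul_eq_mul]
    have hcard : (F.card : ℝ) ≤ t := by exact_mod_cast ht
    have : (F.card : ℝ) * (C / k * βA) ≤ (t : ℝ) * (C / k * βA) := by
      apply mul_le_mul_of_nonneg_right hcard
      positivity
    calc (F.card : ℝ) * (C / k * βA) ≤ (t : ℝ) * (C / k * βA) := this
      _ = ((t : ℝ) / k) * C * βA := by ring
  calc |ℓ u z.2 - ℓ v z.2| ≤ (μ : ℝ) * |u - v| := hlip
    _ ≤ (μ : ℝ) * (((t : ℝ) / k) * C * βA) :=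
        mul_le_mul_of_nonneg_left huv μ.coe_nonneg
    _ = ((t : ℝ) / k) * C * (μ : ℝ) * βA := by ring
end
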